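/- arXiv:2401.14653 — 5 statements merged into one kernel-verified Lean document; each statement's English description precedes it below -/
import Mathlib

section
/- Let G be a finite simple graph of order p ≥ 3 and size q ≥ 2 with no isolated vertices and no K_2 component, having exactly k ≥ 1 pendant edges. If f is a local total antimagic labeling of G whose induced weights take exactly k + 1 distinct values, then f assigns the label p + q to a pendant vertex or to a pendant edge. -/
open scoped Classical

namespace LTA

variable {V : Type*} {W : Type*}

/-- The induced weight of an edge: the sum of the labels of its two endpoints. -/
noncomputable def eWeight (fV : V → ℕ) : Sym2 V → ℕ :=
  Sym2.lift ⟨fun a b => fV a + fV b, fun a b => Nat.add_comm _ _⟩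

/-- The induced weight of a vertex: the sum of the labels of its incident edges. -/
noncomputable def vWeight [Fintype V] (G : SimpleGraph V) (fE : Sym2 V → ℕ) (v : V) : ℕ :=
  ∑ e ∈ G.edgeFinset, if v ∈ e then fE e else 0

/-- A total labeling: the labels form a bijection from `V ∪ E` onto `{1, …, p + q}`. -/
def IsTotalLabeling [Fintype V] (G : SimpleGraph V) (fV : V → ℕ) (fE : Sym2 V → ℕ) : Prop :=
  Function.Injective (Sum.elim fV (fun e : G.edgeSet => fE e.1)) ∧
    Set.range (Sum.elim fV (fun e : G.edgeSet => fE e.1)) =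
      Set.Icc 1 (Fintype.card V + G.edgeFinset.card)

/-- A local total antimagic labeling. -/
def IsLocalTotalAntimagic [Fintype V] (G : SimpleGraph V) (fV : V → ℕ) (fE : Sym2 V → ℕ) :
    Prop :=
  IsTotalLabeling G fV fE ∧
    (∀ u v, G.Adj u v → vWeight G fE u ≠ vWeight G fE v) ∧
    (∀ e₁ ∈ G.edgeSet, ∀ e₂ ∈ G.edgeSet, e₁ ≠ e₂ → (∃ v, v ∈ e₁ ∧ v ∈ e₂) →
      eWeight fV e₁ ≠ eWeight fV e₂) ∧
    (∀ v : V, ∀ e ∈ G.edgeSet, v ∈ e → vWeight G fE v ≠ eWeight fV e)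

/-- The number of distinct induced weights of a total labeling. -/
noncomputable def weightCount [Fintype V] (G : SimpleGraph V) (fV : V → ℕ)
    (fE : Sym2 V → ℕ) : ℕ :=
  (Finset.image (vWeight G fE) Finset.univ ∪ Finset.image (eWeight fV) G.edgeFinset).card

/-- The local total antimagic chromatic number `χ_lt`. -/
noncomputable def chiLT [Fintype V] (G : SimpleGraph V) : ℕ :=
  sInf {n | ∃ fV fE, IsLocalTotalAntimagic G fV fE ∧ weightCount G fV fE = n}

/-- A pendant edge: an edge incident to a vertex of degree 1. -/
def IsPendantEdge [Fintype V] (G : SimpleGraph V) (e : Sym2 V) : Prop :=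
  e ∈ G.edgeSet ∧ ∃ v ∈ e, G.degree v = 1

/-- The number of pendant edges of `G`. -/
noncomputable def pendantEdgeCount [Fintype V] (G : SimpleGraph V) : ℕ :=
  (G.edgeFinset.filter fun e => ∃ v ∈ e, G.degree v = 1).card

/-- A local antimagic (edge) labeling: a bijection from the edges onto `{1, …, q}` such that
adjacent vertices get distinct induced vertex weights. -/
def IsLocalAntimagic [Fintype V] (G : SimpleGraph V) (fE : Sym2 V → ℕ) : Prop :=
  Set.InjOn fE G.edgeSet ∧ fE '' G.edgeSet = Set.Icc 1 G.edgeFinset.card ∧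
    ∀ u v, G.Adj u v → vWeight G fE u ≠ vWeight G fE v

/-- The local antimagic chromatic number `χ_la`. -/
noncomputable def chiLA [Fintype V] (G : SimpleGraph V) : ℕ :=
  sInf {n | ∃ fE, IsLocalAntimagic G fE ∧ (Finset.image (vWeight G fE) Finset.univ).card = n}

/-- A local edge antimagic (vertex) labeling: a bijection from the vertices onto `{1, …, p}`
such that edges sharing an endpoint get distinct induced edge weights. -/
def IsLocalEdgeAntimagic [Fintype V] (G : SimpleGraph V) (fV : V → ℕ) : Prop :=
  Function.Injective fV ∧ Set.range fV = Set.Icc 1 (Fintype.card V) ∧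
    ∀ e₁ ∈ G.edgeSet, ∀ e₂ ∈ G.edgeSet, e₁ ≠ e₂ → (∃ v, v ∈ e₁ ∧ v ∈ e₂) →
      eWeight fV e₁ ≠ eWeight fV e₂

/-- The local edge antimagic chromatic number `χ_lea`. -/
noncomputable def chiLEA [Fintype V] (G : SimpleGraph V) : ℕ :=
  sInf {n | ∃ fV, IsLocalEdgeAntimagic G fV ∧ (Finset.image (eWeight fV) G.edgeFinset).card = n}

/-- The disjoint union of `m` copies of `G`. -/
def copies (m : ℕ) (G : SimpleGraph V) : SimpleGraph (Fin m × V) where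
  Adj x y := x.1 = y.1 ∧ G.Adj x.2 y.2
  symm := ⟨fun x y h => ⟨h.1.symm, h.2.symm⟩⟩
  loopless := ⟨fun x h => G.loopless.irrefl x.2 h.2⟩

/-- The graph obtained from `G` by attaching `s` pendant edges to the vertex `v`. -/
def attachPendants (G : SimpleGraph V) (v : V) (s : ℕ) : SimpleGraph (V ⊕ Fin s) :=
  SimpleGraph.fromRel (fun x y =>
    (∃ a b, G.Adj a b ∧ x = Sum.inl a ∧ y = Sum.inl b) ∨
    (∃ i : Fin s, x = Sum.inl v ∧ y = Sum.inr i))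

/-- The fan graph `f_n` (n triangles sharing a common vertex) with `k` pendant edges attached
to every degree-2 vertex: `f_n(k)`.  The common vertex is `Sum.inl none`, the outer vertices
are `Sum.inl (some w)`, and the pendant vertices are `Sum.inr (w, t)`. -/
def fanGraph (n k : ℕ) :
    SimpleGraph (Option (Fin n × Fin 2) ⊕ (Fin n × Fin 2) × Fin k) :=
  SimpleGraph.fromRel (fun x y =>
    (∃ w, x = Sum.inl none ∧ y = Sum.inl (some w)) ∨
    (∃ i : Fin n, x = Sum.inl (some (i, 0)) ∧ y = Sum.inl (some (i, 1))) ∨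
    (∃ w t, x = Sum.inl (some w) ∧ y = Sum.inr (w, t)))

/-- if a graph of order `p ≥ 3` and size `q ≥ 2` with no isolated vertices, no `K₂`
component and exactly `k ≥ 1` pendant edges has a local total antimagic labeling with exactly
`k + 1` distinct induced weights, then the label `p + q` is assigned to a pendant vertex or to a
pendant edge. -/
theorem stmt1 {V : Type*} [Fintype V] (G : SimpleGraph V) (k : ℕ)
    (hp : 3 ≤ Fintype.card V) (hq : 2 ≤ G.edgeFinset.card)
    (hiso : ∀ v : V, 0 < G.degree v)
    (hK2 : ¬ ∃ u v : V, G.Adj u v ∧ G.degree u = 1 ∧ G.degree v = 1)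
    (hk : 1 ≤ k) (hpend : pendantEdgeCount G = k)
    (fV : V → ℕ) (fE : Sym2 V → ℕ)
    (hf : IsLocalTotalAntimagic G fV fE)
    (hw : weightCount G fV fE = k + 1) :
    (∃ v : V, G.degree v = 1 ∧ fV v = Fintype.card V + G.edgeFinset.card) ∨
    (∃ e : Sym2 V, IsPendantEdge G e ∧ fE e = Fintype.card V + G.edgeFinset.card) := by
  classical
  obtain ⟨⟨hinj, hrange⟩, hvv, hee, hve⟩ := hf
  set N := Fintype.card V + G.edgeFinset.card with hN
  have hNge : 3 ≤ N := le_trans hp (Nat.le_add_right _ _)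
  -- label bounds
  have hVmem : ∀ v : V, fV v ∈ Set.Icc 1 N := fun v => by
    rw [← hrange]; exact ⟨Sum.inl v, rfl⟩
  have hEmem : ∀ e ∈ G.edgeSet, fE e ∈ Set.Icc 1 N := fun e he => by
    rw [← hrange]; exact ⟨Sum.inr ⟨e, he⟩, rfl⟩
  -- vertex weight as a sum over the incidence finset
  have hvW : ∀ v : V, vWeight G fE v = ∑ e ∈ G.incidenceFinset v, fE e := fun v => by
    rw [vWeight, G.incidenceFinset_eq_filter, Finset.sum_filter]
  -- the weight finset
  set S : Finset ℕ :=
    Finset.image (vWeight G fE) Finset.univ ∪ Finset.image (eWeight fV) G.edgeFinset with hS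
  have hScard : S.card = k + 1 := hw
  -- pendant edges
  set PE : Finset (Sym2 V) := G.edgeFinset.filter (fun e => ∃ v ∈ e, G.degree v = 1) with hPE
  have hPEcard : PE.card = k := hpend
  have hfEinj : Set.InjOn fE G.edgeSet := by
    intro e1 h1 e2 h2 h
    have := hinj (a₁ := Sum.inr ⟨e1, h1⟩) (a₂ := Sum.inr ⟨e2, h2⟩) h
    exact congrArg (fun x => (Sum.elim (fun _ : V => e1) (fun e : G.edgeSet => e.1)) x) this
  set T : Finset ℕ := PE.image fE with hT
  have hTcard : T.card = k := by
    rw [hT, Finset.card_image_of_injOn, hPEcard]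
    intro e1 h1 e2 h2 h
    exact hfEinj (SimpleGraph.mem_edgeFinset.mp (Finset.mem_filter.mp h1).1)
      (SimpleGraph.mem_edgeFinset.mp (Finset.mem_filter.mp h2).1) h
  -- each pendant label is the weight of its pendant vertex
  have hTsub : T ⊆ S := by
    intro t ht
    obtain ⟨e, he, rfl⟩ := Finset.mem_image.mp ht
    obtain ⟨heE, v, hve', hdeg⟩ := Finset.mem_filter.mp he
    have hcard1 : (G.incidenceFinset v).card = 1 := by
      rw [G.card_incidenceFinset_eq_degree]; exact hdeg
    obtain ⟨a, ha⟩ := Finset.card_eq_one.mp hcard1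
    have hea : e = a := by
      have : e ∈ G.incidenceFinset v := by
        rw [SimpleGraph.mem_incidenceFinset]
        exact ⟨SimpleGraph.mem_edgeFinset.mp heE, hve'⟩
      rwa [ha, Finset.mem_singleton] at this
    have : vWeight G fE v = fE e := by
      rw [hvW, ha, Finset.sum_singleton, hea]
    exact Finset.mem_union_left _ (Finset.mem_image.mpr ⟨v, Finset.mem_univ v, this⟩)
  have hTle : ∀ t ∈ T, t ≤ N := by
    intro t ht
    obtain ⟨e, he, rfl⟩ := Finset.mem_image.mp ht
    exact (hEmem e (SimpleGraph.mem_edgeFinset.mp (Finset.mem_filter.mp he).1)).2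
  -- the contradiction machine
  have contra : ∀ a b : ℕ, a ∈ S → b ∈ S → a ≠ b → N < a → N < b → False := by
    intro a b ha hb hab hNa hNb
    have hdisj : Disjoint T {a, b} := by
      rw [Finset.disjoint_left]
      intro t ht htab
      have := hTle t ht
      rcases Finset.mem_insert.mp htab with rfl | h
      · omega
      · rw [Finset.mem_singleton] at h; omega
    have hsub : T ∪ {a, b} ⊆ S := Finset.union_subset hTsub (by
      intro x hx
      rcases Finset.mem_insert.mp hx with rfl | h
      · exact ha
      · rw [Finset.mem_singleton] at h; subst h; exact hb)
    have hcard : (T ∪ {a, b}).card = k + 2 := by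
      rw [Finset.card_union_of_disjoint hdisj, hTcard, Finset.card_pair hab]
    have := Finset.card_le_card hsub
    omega
  -- find where the label N lives
  have hNin : N ∈ Set.range (Sum.elim fV (fun e : G.edgeSet => fE e.1)) := by
    rw [hrange]; exact ⟨by omega, le_refl N⟩
  obtain ⟨x, hx⟩ := hNin
  cases x with
  | inl v =>
      simp only [Sum.elim_inl] at hx
      by_cases hdeg : G.degree v = 1
      · exact Or.inl ⟨v, hdeg, hx⟩
      · exfalso
        have h2 : 2 ≤ G.degree v := by have := hiso v; omega
        have h2' : 1 < (G.incidenceFinset v).card := by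
          rw [G.card_incidenceFinset_eq_degree]; omega
        obtain ⟨e1, he1, e2, he2, hne⟩ := Finset.one_lt_card.mp h2'
        have he1' := (G.mem_incidenceFinset _ _).mp he1
        have he2' := (G.mem_incidenceFinset _ _).mp he2
        have hw1 : N < eWeight fV e1 := by
          obtain ⟨y, hy⟩ := Sym2.mem_iff_exists.mp he1'.2
          subst hy
          have : eWeight fV s(v, y) = fV v + fV y := rfl
          rw [this, hx]
          have := (hVmem y).1; omega
        have hw2 : N < eWeight fV e2 := by
          obtain ⟨y, hy⟩ := Sym2.mem_iff_exists.mp he2'.2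
          subst hy
          have : eWeight fV s(v, y) = fV v + fV y := rfl
          rw [this, hx]
          have := (hVmem y).1; omega
        have hne' : eWeight fV e1 ≠ eWeight fV e2 :=
          hee e1 he1'.1 e2 he2'.1 hne ⟨v, he1'.2, he2'.2⟩
        exact contra _ _
          (Finset.mem_union_right _ (Finset.mem_image.mpr
            ⟨e1, SimpleGraph.mem_edgeFinset.mpr he1'.1, rfl⟩))
          (Finset.mem_union_right _ (Finset.mem_image.mpr
            ⟨e2, SimpleGraph.mem_edgeFinset.mpr he2'.1, rfl⟩))
          hne' hw1 hw2
  | inr e =>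
      simp only [Sum.elim_inr] at hx
      by_cases hpe : ∃ v ∈ (e : Sym2 V), G.degree v = 1
      · exact Or.inr ⟨(e : Sym2 V), ⟨e.2, hpe⟩, hx⟩
      · exfalso
        push_neg at hpe
        obtain ⟨u, w, huw⟩ : ∃ u w, (e : Sym2 V) = s(u, w) :=
          Sym2.exists.mp ⟨(e : Sym2 V), rfl⟩
        have hadj : G.Adj u w := by
          have := e.2; rw [huw] at this; exact this
        have hvwt : ∀ z : V, z ∈ (e : Sym2 V) → N < vWeight G fE z := by
          intro z hz
          have hzdeg : 2 ≤ G.degree z := by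
            have h1 := hpe z hz; have := hiso z; omega
          have h2' : 1 < (G.incidenceFinset z).card := by
            rw [G.card_incidenceFinset_eq_degree]; omega
          have hein : (e : Sym2 V) ∈ G.incidenceFinset z := by
            rw [SimpleGraph.mem_incidenceFinset]; exact ⟨e.2, hz⟩
          obtain ⟨e', he', hne'⟩ := Finset.exists_mem_ne h2' (e : Sym2 V)
          have hpairsub : ({(e : Sym2 V), e'} : Finset (Sym2 V)) ⊆ G.incidenceFinset z := by
            intro x hxm
            rcases Finset.mem_insert.mp hxm with rfl | h
            · exact hein
            · rw [Finset.mem_singleton] at h; subst h; exact he'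
          have hsum : fE (e : Sym2 V) + fE e' ≤ vWeight G fE z := by
            rw [hvW]
            calc fE (e : Sym2 V) + fE e'
                = ∑ x ∈ ({(e : Sym2 V), e'} : Finset (Sym2 V)), fE x := by
                  rw [Finset.sum_pair (Ne.symm hne')]
              _ ≤ _ := Finset.sum_le_sum_of_subset hpairsub
          have he'E : e' ∈ G.edgeSet :=
            ((G.mem_incidenceFinset _ _).mp he').1
          have := (hEmem e' he'E).1
          omega
        have h1 : N < vWeight G fE u := hvwt u (by rw [huw]; exact Sym2.mem_mk_left u w)
        have h2 : N < vWeight G fE w := hvwt w (by rw [huw]; exact Sym2.mem_mk_right u w)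
        exact contra _ _
          (Finset.mem_union_left _ (Finset.mem_image.mpr ⟨u, Finset.mem_univ u, rfl⟩))
          (Finset.mem_union_left _ (Finset.mem_image.mpr ⟨w, Finset.mem_univ w, rfl⟩))
          (hvv u w hadj) h1 h2


end LTA
end

section
/- Let G be a finite simple graph of order p and size q that has exactly one vertex u of maximum degree Δ ≥ 3, such that u is not adjacent to any pendant vertex, every other vertex of G has degree at most m < Δ, G has exactly k ≥ Δ pendant edges, and Δ(Δ+1) > max{m(2(p+q) − m + 1), 4(p+q) − 2}. If G admits a local total antimagic labeling, then χ_lt(G) ≥ k + 2. -/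
open scoped Classical

namespace LTA

variable {V : Type*} {W : Type*}

/-- Any finset of naturals satisfies `c² ≤ 2·sum + c`. -/
theorem sumA (s : Finset ℕ) : s.card * s.card ≤ 2 * (∑ x ∈ s, x) + s.card := by
  induction s using Finset.strongInduction with
  | _ s ih =>
    rcases s.eq_empty_or_nonempty with rfl | hne
    · simp
    · set M := s.max' hne with hM
      have hMm : M ∈ s := s.max'_mem hne
      have hsub : s ⊆ Finset.range (M+1) := by
        intro x hx
        simp only [Finset.mem_range, Nat.lt_succ_iff]
        exact s.le_max' x hx
      have hcard : s.card ≤ M + 1 := by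
        simpa using Finset.card_le_card hsub
      have hih := ih (s.erase M) (Finset.erase_ssubset hMm)
      have hce : (s.erase M).card = s.card - 1 := Finset.card_erase_of_mem hMm
      have hsum : M + ∑ x ∈ s.erase M, x = ∑ x ∈ s, x :=
        Finset.add_sum_erase s (fun x => x) hMm
      have hc1 : 1 ≤ s.card := Finset.card_pos.mpr hne
      obtain ⟨c, hc⟩ : ∃ c, s.card = c + 1 := ⟨s.card - 1, by omega⟩
      rw [hce] at hih
      have hce' : s.card - 1 = c := by omega
      rw [hce'] at hih
      rw [hc] at hcard ⊢
      nlinarith [hih, hsum, hcard]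

/-- A finset of `c` distinct positive naturals has sum at least `c(c+1)/2`. -/
theorem sumB (s : Finset ℕ) (h : ∀ x ∈ s, 1 ≤ x) :
    s.card * (s.card + 1) ≤ 2 * ∑ x ∈ s, x := by
  classical
  set t := s.image (· - 1) with ht
  have hinj : ∀ x ∈ s, ∀ y ∈ s, x - 1 = y - 1 → x = y := by
    intro x hx y hy hxy
    have := h x hx; have := h y hy; omega
  have hcard : t.card = s.card := Finset.card_image_of_injOn hinj
  have hsum : ∑ y ∈ t, y = ∑ x ∈ s, (x - 1) := Finset.sum_image hinj
  have hsum2 : ∑ x ∈ s, (x - 1) + s.card = ∑ x ∈ s, x := by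
    have h1 : ∑ x ∈ s, x = ∑ x ∈ s, ((x - 1) + 1) :=
      Finset.sum_congr rfl (fun x hx => by have := h x hx; omega)
    rw [h1, Finset.sum_add_distrib]
    simp
  have := sumA t
  rw [hcard, hsum] at this
  nlinarith [this, hsum2]

/-- A finset of `c` distinct naturals each at most `N` has `2·sum + c² ≤ c(2N+1)`. -/
theorem sumC (s : Finset ℕ) (N : ℕ) (hle : ∀ x ∈ s, x ≤ N) :
    2 * (∑ x ∈ s, x) + s.card * s.card ≤ s.card * (2 * N + 1) := by
  classical
  set t := s.image (N - ·) with ht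
  have hinj : ∀ x ∈ s, ∀ y ∈ s, N - x = N - y → x = y := by
    intro x hx y hy hxy
    have := hle x hx; have := hle y hy; omega
  have hcard : t.card = s.card := Finset.card_image_of_injOn hinj
  have hsum : ∑ y ∈ t, y = ∑ x ∈ s, (N - x) := Finset.sum_image hinj
  have hsum2 : ∑ x ∈ s, x + ∑ x ∈ s, (N - x) = s.card * N := by
    rw [← Finset.sum_add_distrib]
    rw [Finset.sum_congr rfl
      (fun x hx => by have := hle x hx; omega : ∀ x ∈ s, x + (N - x) = N)]
    simp [mul_comm]
  have := sumA t
  rw [hcard, hsum] at this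
  nlinarith [this, hsum2]

/-- The vertex weight is a sum over the incidence finset. -/
theorem vWeight_eq_sum_incidence [Fintype V] (G : SimpleGraph V) (fE : Sym2 V → ℕ) (v : V) :
    vWeight G fE v = ∑ e ∈ G.incidenceFinset v, fE e := by
  rw [SimpleGraph.incidenceFinset_eq_filter, Finset.sum_filter]
  rfl

theorem mem_incidence_edgeSet [Fintype V] {G : SimpleGraph V} {v : V} {e : Sym2 V}
    (he : e ∈ G.incidenceFinset v) : e ∈ G.edgeSet :=
  ((G.mem_incidenceFinset v e).mp he).1

theorem mem_incidence_mem [Fintype V] {G : SimpleGraph V} {v : V} {e : Sym2 V}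
    (he : e ∈ G.incidenceFinset v) : v ∈ e :=
  ((G.mem_incidenceFinset v e).mp he).2

theorem mem_incidenceFinset' [Fintype V] {G : SimpleGraph V} {v : V} {e : Sym2 V}
    (he : e ∈ G.edgeSet) (hv : v ∈ e) : e ∈ G.incidenceFinset v :=
  (G.mem_incidenceFinset v e).mpr ⟨he, hv⟩

theorem two_vWeight_lower [Fintype V] (G : SimpleGraph V) (fE : Sym2 V → ℕ)
    (hinj : Set.InjOn fE G.edgeSet) (h1 : ∀ e ∈ G.edgeSet, 1 ≤ fE e) (v : V) :
    G.degree v * (G.degree v + 1) ≤ 2 * vWeight G fE v := by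
  classical
  rw [vWeight_eq_sum_incidence]
  set I := G.incidenceFinset v with hI
  have hinj' : ∀ x ∈ I, ∀ y ∈ I, fE x = fE y → x = y := fun x hx y hy =>
    hinj (mem_incidence_edgeSet hx) (mem_incidence_edgeSet hy)
  have hcard : (I.image fE).card = I.card := Finset.card_image_of_injOn hinj'
  have hsum : ∑ a ∈ I.image fE, a = ∑ e ∈ I, fE e := Finset.sum_image hinj'
  have hdeg : I.card = G.degree v := G.card_incidenceFinset_eq_degree v
  have := sumB (I.image fE) (by
    intro x hx
    obtain ⟨e, he, rfl⟩ := Finset.mem_image.mp hx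
    exact h1 e (mem_incidence_edgeSet he))
  rw [hcard, hsum, hdeg] at this
  exact this

theorem two_vWeight_upper [Fintype V] (G : SimpleGraph V) (fE : Sym2 V → ℕ) (N : ℕ)
    (hinj : Set.InjOn fE G.edgeSet) (hN : ∀ e ∈ G.edgeSet, fE e ≤ N) (v : V) :
    2 * vWeight G fE v + G.degree v * G.degree v ≤ G.degree v * (2 * N + 1) := by
  classical
  rw [vWeight_eq_sum_incidence]
  set I := G.incidenceFinset v with hI
  have hinj' : ∀ x ∈ I, ∀ y ∈ I, fE x = fE y → x = y := fun x hx y hy =>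
    hinj (mem_incidence_edgeSet hx) (mem_incidence_edgeSet hy)
  have hcard : (I.image fE).card = I.card := Finset.card_image_of_injOn hinj'
  have hsum : ∑ a ∈ I.image fE, a = ∑ e ∈ I, fE e := Finset.sum_image hinj'
  have hdeg : I.card = G.degree v := G.card_incidenceFinset_eq_degree v
  have := sumC (I.image fE) N (by
    intro x hx
    obtain ⟨e, he, rfl⟩ := Finset.mem_image.mp hx
    exact hN e (mem_incidence_edgeSet he))
  rw [hcard, hsum, hdeg] at this
  exact this

theorem incidence_singleton [Fintype V] {G : SimpleGraph V} {v : V} {e : Sym2 V}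
    (hdeg : G.degree v = 1) (he : e ∈ G.incidenceFinset v) :
    G.incidenceFinset v = {e} := by
  classical
  have hcard : (G.incidenceFinset v).card = 1 := by
    rw [G.card_incidenceFinset_eq_degree, hdeg]
  obtain ⟨a, ha⟩ := Finset.card_eq_one.mp hcard
  rw [ha] at he ⊢
  rw [Finset.mem_singleton.mp he]

/-- Vertex weight of a pendant vertex is the label of its unique edge. -/
theorem vWeight_pendant [Fintype V] {G : SimpleGraph V} (fE : Sym2 V → ℕ) {v : V} {e : Sym2 V}
    (hdeg : G.degree v = 1) (he : e ∈ G.edgeSet) (hv : v ∈ e) :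
    vWeight G fE v = fE e := by
  rw [vWeight_eq_sum_incidence, incidence_singleton hdeg (mem_incidenceFinset' he hv)]
  simp

/-- Key counting lemma: any local total antimagic labeling of a graph satisfying the
hypotheses has at least `k + 2` distinct induced weights. -/
theorem stmt5_aux {V : Type*} [Fintype V] (G : SimpleGraph V) (u : V) (Δ m k : ℕ)
    (hdeg : G.degree u = Δ) (hΔ3 : 3 ≤ Δ)
    (hother : ∀ w : V, w ≠ u → G.degree w ≤ m) (hm : m < Δ)
    (hnotadj : ∀ w : V, G.Adj u w → G.degree w ≠ 1)
    (hpend : pendantEdgeCount G = k) (hkΔ : Δ ≤ k)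
    (hbig : Δ * (Δ + 1) >
      max (m * (2 * (Fintype.card V + G.edgeFinset.card) - m + 1))
        (4 * (Fintype.card V + G.edgeFinset.card) - 2))
    (fV : V → ℕ) (fE : Sym2 V → ℕ) (hlab : IsLocalTotalAntimagic G fV fE) :
    k + 2 ≤ weightCount G fV fE := by
  classical
  set N := Fintype.card V + G.edgeFinset.card with hN
  obtain ⟨⟨hinj, hrange⟩, hvv, hee, hve⟩ := hlab
  -- basic label facts
  have hfEinj : Set.InjOn fE G.edgeSet := by
    intro e₁ h₁ e₂ h₂ hfe
    have h12 : (Sum.elim fV (fun e : G.edgeSet => fE e.1)) (Sum.inr ⟨e₁, h₁⟩) =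
        (Sum.elim fV (fun e : G.edgeSet => fE e.1)) (Sum.inr ⟨e₂, h₂⟩) := by simpa using hfe
    have := hinj h12
    simpa using this
  have hfEIcc : ∀ e ∈ G.edgeSet, 1 ≤ fE e ∧ fE e ≤ N := by
    intro e he
    have : fE e ∈ Set.Icc 1 N := by
      rw [hN, ← hrange]
      exact ⟨Sum.inr ⟨e, he⟩, rfl⟩
    exact this
  have hfE1 : ∀ e ∈ G.edgeSet, 1 ≤ fE e := fun e he => (hfEIcc e he).1
  have hfEN : ∀ e ∈ G.edgeSet, fE e ≤ N := fun e he => (hfEIcc e he).2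
  -- the pendant edges
  set P := G.edgeFinset.filter (fun e => ∃ v ∈ e, G.degree v = 1) with hPdef
  have hPcard : P.card = k := hpend
  have hPedge : ∀ e ∈ P, e ∈ G.edgeSet := by
    intro e he
    exact SimpleGraph.mem_edgeFinset.mp (Finset.mem_filter.mp he).1
  -- the pendant labels
  set S := P.image fE with hSdef
  have hScard : S.card = k := by
    rw [hSdef, Finset.card_image_of_injOn (fun x hx y hy => hfEinj (hPedge x hx) (hPedge y hy)),
      hPcard]
  have hSne : S.Nonempty := by
    rw [← Finset.card_pos, hScard]; omega
  set L := S.max' hSne with hL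
  obtain ⟨estar, hestarP, hestarL⟩ := Finset.mem_image.mp (S.max'_mem hSne)
  obtain ⟨vstar, hvstar_mem, hvstar_deg⟩ := (Finset.mem_filter.mp hestarP).2
  have hestarE : estar ∈ G.edgeSet := hPedge estar hestarP
  -- the support vertex x
  set x := Sym2.Mem.other hvstar_mem with hx
  have hxe : s(vstar, x) = estar := Sym2.other_spec hvstar_mem
  have hadj : G.Adj vstar x := by
    rw [← SimpleGraph.mem_edgeSet, hxe]; exact hestarE
  have hxmem : x ∈ estar := by rw [← hxe]; exact Sym2.mem_mk_right _ _
  have hxu : x ≠ u := by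
    intro h
    exact hnotadj vstar (by rw [← h]; exact hadj.symm) hvstar_deg
  -- pendant weights are vertex weights
  set W := Finset.image (vWeight G fE) Finset.univ with hW
  have hSW : S ⊆ W := by
    intro a ha
    obtain ⟨e, heP, rfl⟩ := Finset.mem_image.mp ha
    obtain ⟨v, hv_mem, hv_deg⟩ := (Finset.mem_filter.mp heP).2
    exact Finset.mem_image.mpr ⟨v, Finset.mem_univ v,
      vWeight_pendant fE hv_deg (hPedge e heP) hv_mem⟩
  -- x has degree at least 2
  have hdegx2 : 2 ≤ G.degree x := by
    by_contra h
    push_neg at h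
    interval_cases hdx : G.degree x
    · have := hadj
      rw [← SimpleGraph.mem_neighborFinset] at this
      have hc : (G.neighborFinset x).card = 0 := by
        rw [SimpleGraph.card_neighborFinset_eq_degree]; omega
      rw [Finset.card_eq_zero] at hc
      rw [SimpleGraph.mem_neighborFinset] at this
      have : vstar ∈ G.neighborFinset x := (SimpleGraph.mem_neighborFinset G x vstar).mpr hadj.symm
      rw [hc] at this
      simp at this
    · have h1 : vWeight G fE x = fE estar := vWeight_pendant fE hdx hestarE hxmem
      have h2 : vWeight G fE vstar = fE estar := vWeight_pendant fE hvstar_deg hestarE hvstar_mem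
      exact hvv vstar x hadj (h2.trans h1.symm)
  -- degree x ≤ m, m ≤ N
  have hdx_m : G.degree x ≤ m := hother x hxu
  have hΔV : Δ < Fintype.card V := by
    rw [← hdeg]; exact G.degree_lt_card_verts u
  have hq1 : 1 ≤ G.edgeFinset.card :=
    Finset.card_pos.mpr ⟨estar, SimpleGraph.mem_edgeFinset.mpr hestarE⟩
  have hmN : m ≤ N := by omega
  -- vWeight x > L
  have hwxL : L < vWeight G fE x := by
    rw [vWeight_eq_sum_incidence]
    set I := G.incidenceFinset x with hI
    have heI : estar ∈ I := mem_incidenceFinset' hestarE hxmem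
    have hIcard : I.card = G.degree x := G.card_incidenceFinset_eq_degree x
    have hne : (I.erase estar).Nonempty := by
      rw [← Finset.card_pos, Finset.card_erase_of_mem heI, hIcard]; omega
    obtain ⟨e', he'⟩ := hne
    have hsum : fE estar + ∑ e ∈ I.erase estar, fE e = ∑ e ∈ I, fE e :=
      Finset.add_sum_erase I fE heI
    have h2 : fE e' ≤ ∑ e ∈ I.erase estar, fE e :=
      Finset.single_le_sum (fun i _ => Nat.zero_le _) he'
    have h3 : 1 ≤ fE e' :=
      hfE1 e' (mem_incidence_edgeSet (Finset.mem_of_mem_erase he'))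
    omega
  -- vWeight u > vWeight x
  have hwu : Δ * (Δ + 1) ≤ 2 * vWeight G fE u := by
    rw [← hdeg]
    exact two_vWeight_lower G fE hfEinj hfE1 u
  have hwxu : vWeight G fE x < vWeight G fE u := by
    have hup := two_vWeight_upper G fE N hfEinj hfEN x
    set d := G.degree x with hd
    have key : d * (2 * N + 1) + m * m ≤ m * (2 * N + 1) + d * d := by
      zify
      nlinarith [mul_nonneg (by omega : (0:ℤ) ≤ (m : ℤ) - (d : ℤ))
        (by push_cast; omega : (0:ℤ) ≤ 2 * (N : ℤ) + 1 - (m : ℤ) - (d : ℤ))]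
    have hsplit : m * (2 * N - m + 1) + m * m = m * (2 * N + 1) := by
      rw [← Nat.mul_add]
      congr 1
      omega
    have hb : m * (2 * N - m + 1) < Δ * (Δ + 1) := lt_of_le_of_lt (le_max_left _ _) hbig
    omega
  -- the count
  have hSle : ∀ a ∈ S, a ≤ L := fun a ha => S.le_max' a ha
  have hwxS : vWeight G fE x ∉ S := fun h => absurd (hSle _ h) (by omega)
  have hwuS : vWeight G fE u ∉ insert (vWeight G fE x) S := by
    intro h
    rcases Finset.mem_insert.mp h with h | h
    · omega
    · have := hSle _ h; omega
  have hsub : insert (vWeight G fE u) (insert (vWeight G fE x) S) ⊆ W := by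
    intro a ha
    rcases Finset.mem_insert.mp ha with rfl | ha
    · exact Finset.mem_image.mpr ⟨u, Finset.mem_univ u, rfl⟩
    rcases Finset.mem_insert.mp ha with rfl | ha
    · exact Finset.mem_image.mpr ⟨x, Finset.mem_univ x, rfl⟩
    · exact hSW ha
  have hcard2 : (insert (vWeight G fE u) (insert (vWeight G fE x) S)).card = k + 2 := by
    rw [Finset.card_insert_of_notMem hwuS, Finset.card_insert_of_notMem hwxS, hScard]
  have hWle : W.card ≤ weightCount G fV fE := by
    rw [weightCount]
    exact Finset.card_le_card (Finset.subset_union_left)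
  calc k + 2 = (insert (vWeight G fE u) (insert (vWeight G fE x) S)).card := hcard2.symm
    _ ≤ W.card := Finset.card_le_card hsub
    _ ≤ weightCount G fV fE := hWle


/-- suppose `G` has exactly one vertex `u` of maximum degree `Δ ≥ 3`, `u` is not
adjacent to any pendant vertex, every other vertex has degree at most `m < Δ`, `G` has exactly
`k ≥ Δ` pendant edges, and `Δ(Δ+1) > max {m(2(p+q) - m + 1), 4(p+q) - 2}`.  If `G` admits a
local total antimagic labeling, then `χ_lt(G) ≥ k + 2`. -/
theorem stmt5 {V : Type*} [Fintype V] (G : SimpleGraph V) (u : V) (Δ m k : ℕ)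
    (hdeg : G.degree u = Δ) (hΔ3 : 3 ≤ Δ)
    (hother : ∀ w : V, w ≠ u → G.degree w ≤ m) (hm : m < Δ)
    (hnotadj : ∀ w : V, G.Adj u w → G.degree w ≠ 1)
    (hpend : pendantEdgeCount G = k) (hkΔ : Δ ≤ k)
    (hbig : Δ * (Δ + 1) >
      max (m * (2 * (Fintype.card V + G.edgeFinset.card) - m + 1))
        (4 * (Fintype.card V + G.edgeFinset.card) - 2))
    (hex : ∃ (fV : V → ℕ) (fE : Sym2 V → ℕ), IsLocalTotalAntimagic G fV fE) :
    k + 2 ≤ chiLT G := by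
  obtain ⟨fV0, fE0, hlab0⟩ := hex
  rw [chiLT]
  refine le_csInf ⟨weightCount G fV0 fE0, ⟨fV0, fE0, hlab0, rfl⟩⟩ ?_
  rintro b ⟨fV, fE, hlab, rfl⟩
  exact stmt5_aux G u Δ m k hdeg hΔ3 hother hm hnotadj hpend hkΔ hbig fV fE hlab


end LTA
end

section
/- For integers n and k with 2n ≥ k + 3 ≥ 4 and 2n(2n+1) − 2n(k+2)(4k+5) + (k+2)(k−1) > 0, the graph f_n(k) satisfies χ_lt(f_n(k)) ≥ 2nk + 2. -/
open scoped Classical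

namespace LTA

variable {V : Type*} {W : Type*}

namespace Aux


/-- Sum of a finset of naturals, all `≥ c`, is at least `∑_{i<d} (c+i)`. -/
lemma sum_ge_of_all_ge (c : ℕ) (t : Finset ℕ) (h : ∀ x ∈ t, c ≤ x) :
    ∑ i ∈ Finset.range t.card, (c + i) ≤ ∑ x ∈ t, x := by
  induction t using Finset.strongInduction with
  | _ t ih =>
    rcases t.eq_empty_or_nonempty with rfl | ht
    · simp
    · set m := t.max' ht with hm
      have hmem : m ∈ t := t.max'_mem ht
      have hsub : t ⊆ Finset.Icc c m := fun x hx =>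
        Finset.mem_Icc.mpr ⟨h x hx, t.le_max' x hx⟩
      have hcard : t.card ≤ m + 1 - c := by
        simpa [Nat.card_Icc] using Finset.card_le_card hsub
      have hcm : c ≤ m := h m hmem
      have hd : 1 ≤ t.card := Finset.card_pos.mpr ht
      have herase := ih (t.erase m) (Finset.erase_ssubset hmem)
        (fun x hx => h x (Finset.mem_of_mem_erase hx))
      have hce : (t.erase m).card = t.card - 1 := Finset.card_erase_of_mem hmem
      have hsum : ∑ x ∈ t, x = m + ∑ x ∈ t.erase m, x := (Finset.add_sum_erase t id hmem).symm
      have hrange : ∑ i ∈ Finset.range t.card, (c + i)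
          = ∑ i ∈ Finset.range (t.card - 1), (c + i) + (c + (t.card - 1)) := by
        conv_lhs => rw [show t.card = (t.card - 1) + 1 by omega]
        rw [Finset.sum_range_succ]
      rw [hce] at herase
      omega

/-- Sum of a finset of naturals, all `≤ M`, is at most `∑_{i<d} (M-i)`. -/
lemma sum_le_of_all_le (M : ℕ) (t : Finset ℕ) (h : ∀ x ∈ t, x ≤ M) :
    ∑ x ∈ t, x ≤ ∑ i ∈ Finset.range t.card, (M - i) := by
  induction t using Finset.strongInduction generalizing M with
  | _ t ih =>
    rcases t.eq_empty_or_nonempty with rfl | ht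
    · simp
    · set m := t.max' ht with hm
      have hmem : m ∈ t := t.max'_mem ht
      have hmM : m ≤ M := h m hmem
      have hd : 1 ≤ t.card := Finset.card_pos.mpr ht
      have herase := ih (t.erase m) (Finset.erase_ssubset hmem) (M - 1)
        (fun x hx => by
          have h1 : x ≤ m := t.le_max' x (Finset.mem_of_mem_erase hx)
          have h2 : x ≠ m := Finset.ne_of_mem_erase hx
          omega)
      have hce : (t.erase m).card = t.card - 1 := Finset.card_erase_of_mem hmem
      have hsum : ∑ x ∈ t, x = m + ∑ x ∈ t.erase m, x := (Finset.add_sum_erase t id hmem).symm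
      have hrange : ∑ i ∈ Finset.range t.card, (M - i)
          = ∑ i ∈ Finset.range (t.card - 1), (M - (i + 1)) + M := by
        conv_lhs => rw [show t.card = (t.card - 1) + 1 by omega]
        rw [Finset.sum_range_succ']
        simp
      have hsame : ∑ i ∈ Finset.range (t.card - 1), (M - (i + 1))
          = ∑ i ∈ Finset.range (t.card - 1), (M - 1 - i) := by
        apply Finset.sum_congr rfl; intro i _; omega
      rw [hce] at herase
      omega

lemma gauss_ge (c d : ℕ) : 2 * ∑ i ∈ Finset.range d, (c + i) = 2 * d * c + d * (d - 1) := by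
  rw [Finset.sum_add_distrib, Finset.sum_const, Finset.card_range, Nat.mul_add,
    ← Finset.sum_range_id_mul_two d]
  ring

lemma gauss_le (M d : ℕ) (h : d ≤ M + 1) :
    2 * ∑ i ∈ Finset.range d, (M - i) + d * (d - 1) = 2 * d * M := by
  induction d with
  | zero => simp
  | succ e ihe =>
    rw [Finset.sum_range_succ]
    have h1 : (e + 1) * (e + 1 - 1) = e * (e - 1) + 2 * e := by
      cases e with
      | zero => simp
      | succ f => simp only [Nat.add_sub_cancel]; ring
    have h2 : 2 * (e + 1) * M = 2 * e * M + 2 * M := by ring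
    have h3 := ihe (by omega)
    omega




variable {n k : ℕ}

abbrev Vt (n k : ℕ) := Option (Fin n × Fin 2) ⊕ (Fin n × Fin 2) × Fin k

def C : Vt n k := Sum.inl none
def S (w : Fin n × Fin 2) : Vt n k := Sum.inl (some w)
def P (w : Fin n × Fin 2) (t : Fin k) : Vt n k := Sum.inr (w, t)

lemma adj_CS (w : Fin n × Fin 2) : (fanGraph n k).Adj C (S w) := by
  rw [fanGraph, SimpleGraph.fromRel_adj]
  exact ⟨by simp [C, S], Or.inl (Or.inl ⟨w, rfl, rfl⟩)⟩

lemma adj_SS (i : Fin n) : (fanGraph n k).Adj (S (i,0)) (S (i,1)) := by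
  rw [fanGraph, SimpleGraph.fromRel_adj]
  exact ⟨by simp [S], Or.inl (Or.inr (Or.inl ⟨i, rfl, rfl⟩))⟩

lemma adj_SP (w : Fin n × Fin 2) (t : Fin k) : (fanGraph n k).Adj (S w) (P w t) := by
  rw [fanGraph, SimpleGraph.fromRel_adj]
  exact ⟨by simp [S, P], Or.inl (Or.inr (Or.inr ⟨w, t, rfl, rfl⟩))⟩



noncomputable def E1 (n k : ℕ) : Finset (Sym2 (Vt n k)) :=
  Finset.univ.image fun w : Fin n × Fin 2 => s(C, S w)
noncomputable def E2 (n k : ℕ) : Finset (Sym2 (Vt n k)) :=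
  Finset.univ.image fun i : Fin n => s(S (i,0), S (i,1))
noncomputable def E3 (n k : ℕ) : Finset (Sym2 (Vt n k)) :=
  Finset.univ.image fun wt : (Fin n × Fin 2) × Fin k => s(S wt.1, P wt.1 wt.2)

lemma edgeFinset_eq : (fanGraph n k).edgeFinset = E1 n k ∪ E2 n k ∪ E3 n k := by
  ext e
  induction e with
  | _ x y =>
    rw [SimpleGraph.mem_edgeFinset]
    simp only [SimpleGraph.mem_edgeFinset, SimpleGraph.mem_edgeSet, fanGraph,
      SimpleGraph.fromRel_adj, E1, E2, E3, Finset.mem_union, Finset.mem_image,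
      Finset.mem_univ, true_and, Sym2.eq, Sym2.rel_iff', Prod.mk.injEq,
      Prod.swap_prod_mk, C, S, P]
    constructor
    · rintro ⟨hne, (⟨w, rfl, rfl⟩ | ⟨i, rfl, rfl⟩ | ⟨w, t, rfl, rfl⟩) |
        (⟨w, rfl, rfl⟩ | ⟨i, rfl, rfl⟩ | ⟨w, t, rfl, rfl⟩)⟩
      · exact Or.inl (Or.inl ⟨w, Or.inl ⟨rfl, rfl⟩⟩)
      · exact Or.inl (Or.inr ⟨i, Or.inl ⟨rfl, rfl⟩⟩)
      · exact Or.inr ⟨(w, t), Or.inl ⟨rfl, rfl⟩⟩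
      · exact Or.inl (Or.inl ⟨w, Or.inr ⟨rfl, rfl⟩⟩)
      · exact Or.inl (Or.inr ⟨i, Or.inr ⟨rfl, rfl⟩⟩)
      · exact Or.inr ⟨(w, t), Or.inr ⟨rfl, rfl⟩⟩
    · rintro ((⟨w, (⟨rfl, rfl⟩ | ⟨rfl, rfl⟩)⟩ | ⟨i, (⟨rfl, rfl⟩ | ⟨rfl, rfl⟩)⟩) |
        ⟨wt, (⟨rfl, rfl⟩ | ⟨rfl, rfl⟩)⟩)
      · exact ⟨by simp, Or.inl (Or.inl ⟨w, rfl, rfl⟩)⟩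
      · exact ⟨by simp, Or.inr (Or.inl ⟨w, rfl, rfl⟩)⟩
      · exact ⟨by simp, Or.inl (Or.inr (Or.inl ⟨i, rfl, rfl⟩))⟩
      · exact ⟨by simp, Or.inr (Or.inr (Or.inl ⟨i, rfl, rfl⟩))⟩
      · exact ⟨by simp, Or.inl (Or.inr (Or.inr ⟨wt.1, wt.2, rfl, rfl⟩))⟩
      · exact ⟨by simp, Or.inr (Or.inr (Or.inr ⟨wt.1, wt.2, rfl, rfl⟩))⟩


lemma spoke_inj : Function.Injective (fun w : Fin n × Fin 2 => s(C, S w) : _ → Sym2 (Vt n k)) := by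
  intro a b h
  simpa [Sym2.eq, Sym2.rel_iff', Prod.swap_prod_mk, C, S] using h

lemma tri_inj : Function.Injective (fun i : Fin n => s(S (i,0), S (i,1)) : _ → Sym2 (Vt n k)) := by
  intro a b h
  simp only [Sym2.eq, Sym2.rel_iff', Prod.swap_prod_mk, Prod.mk.injEq, S,
    Sum.inl.injEq, Option.some.injEq] at h
  rcases h with ⟨⟨h1, _⟩, _⟩ | ⟨⟨_, h2⟩, _⟩
  · exact h1
  · exact absurd h2 (by decide)

lemma pend_inj : Function.Injective
    (fun wt : (Fin n × Fin 2) × Fin k => s(S wt.1, P wt.1 wt.2) : _ → Sym2 (Vt n k)) := by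
  intro a b h
  simp only [Sym2.eq, Sym2.rel_iff', Prod.swap_prod_mk, Prod.mk.injEq, S, P,
    Sum.inl.injEq, Option.some.injEq, Sum.inr.injEq] at h
  rcases h with ⟨h1, h2, h3⟩ | ⟨h1, h2⟩
  · exact Prod.ext h1 h3
  · simp at h1
  
lemma disj12 : Disjoint (E1 n k) (E2 n k) := by
  rw [Finset.disjoint_left]
  rintro e he1 he2
  simp only [E1, E2, Finset.mem_image, Finset.mem_univ, true_and] at he1 he2
  obtain ⟨w, rfl⟩ := he1
  obtain ⟨i, h⟩ := he2
  simp [Sym2.eq, Sym2.rel_iff', Prod.swap_prod_mk, C, S] at h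

lemma disj13 : Disjoint (E1 n k) (E3 n k) := by
  rw [Finset.disjoint_left]
  rintro e he1 he2
  simp only [E1, E3, Finset.mem_image, Finset.mem_univ, true_and] at he1 he2
  obtain ⟨w, rfl⟩ := he1
  obtain ⟨wt, h⟩ := he2
  simp [Sym2.eq, Sym2.rel_iff', Prod.swap_prod_mk, C, S, P] at h

lemma disj23 : Disjoint (E2 n k) (E3 n k) := by
  rw [Finset.disjoint_left]
  rintro e he1 he2
  simp only [E2, E3, Finset.mem_image, Finset.mem_univ, true_and] at he1 he2
  obtain ⟨i, rfl⟩ := he1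
  obtain ⟨wt, h⟩ := he2
  simp [Sym2.eq, Sym2.rel_iff', Prod.swap_prod_mk, C, S, P] at h

lemma sum_edges (f : Sym2 (Vt n k) → ℕ) :
    ∑ e ∈ (fanGraph n k).edgeFinset, f e =
      (∑ w : Fin n × Fin 2, f s(C, S w)) + (∑ i : Fin n, f s(S (i,0), S (i,1)))
        + (∑ wt : (Fin n × Fin 2) × Fin k, f s(S wt.1, P wt.1 wt.2)) := by
  rw [edgeFinset_eq, Finset.sum_union (by
      rw [Finset.disjoint_union_left]; exact ⟨disj13, disj23⟩),
    Finset.sum_union disj12, E1, E2, E3,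
    Finset.sum_image (fun a _ b _ h => spoke_inj h),
    Finset.sum_image (fun a _ b _ h => tri_inj h),
    Finset.sum_image (fun a _ b _ h => pend_inj h)]

lemma card_edgeFinset : (fanGraph n k).edgeFinset.card = 3 * n + 2 * n * k := by
  have : ∑ e ∈ (fanGraph n k).edgeFinset, 1 = (fanGraph n k).edgeFinset.card :=
    Finset.card_eq_sum_ones _ ▸ rfl
  rw [← this, sum_edges]
  simp [Fintype.card_prod, mul_comm, mul_assoc, mul_left_comm]
  ring

lemma card_Vt : Fintype.card (Vt n k) = 1 + 2 * n + 2 * n * k := by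
  simp [Fintype.card_sum, Fintype.card_option, Fintype.card_prod]
  ring

lemma vWeight_C (fE : Sym2 (Vt n k) → ℕ) :
    vWeight (fanGraph n k) fE C = ∑ w : Fin n × Fin 2, fE s(C, S w) := by
  rw [vWeight, sum_edges]
  simp [Sym2.mem_iff, C, S, P]

lemma vWeight_P (fE : Sym2 (Vt n k) → ℕ) (w : Fin n × Fin 2) (t : Fin k) :
    vWeight (fanGraph n k) fE (P w t) = fE s(S w, P w t) := by
  rw [vWeight, sum_edges]
  simp only [Sym2.mem_iff, C, S, P, Sum.inr.injEq, Prod.mk.injEq]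
  rw [Finset.sum_eq_zero (fun x _ => by simp), Finset.sum_eq_zero (fun x _ => by simp)]
  rw [show (∑ wt : (Fin n × Fin 2) × Fin k,
      if Sum.inr (w, t) = Sum.inl (some wt.1) ∨ w = wt.1 ∧ t = wt.2 then
        fE s(Sum.inl (some wt.1), Sum.inr (wt.1, wt.2)) else 0)
      = ∑ wt : (Fin n × Fin 2) × Fin k,
      if wt = (w, t) then fE s(Sum.inl (some wt.1), Sum.inr (wt.1, wt.2)) else 0 by
    refine Finset.sum_congr rfl fun x _ => if_congr ?_ rfl rfl
    constructor
    · rintro (h | ⟨h1, h2⟩)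
      · simp at h
      · exact Prod.ext h1.symm h2.symm
    · rintro rfl; exact Or.inr ⟨rfl, rfl⟩]
  rw [Finset.sum_ite_eq' Finset.univ (w, t)]
  simp

lemma mem_tri_iff (i i' : Fin n) (j : Fin 2) :
    ((S (i,j) : Vt n k) = S (i',0) ∨ (S (i,j) : Vt n k) = S (i',1)) ↔ i' = i := by
  constructor
  · rintro (h | h) <;> simp only [S, Sum.inl.injEq, Option.some.injEq, Prod.mk.injEq] at h <;>
      exact h.1.symm
  · rintro rfl
    fin_cases j
    · exact Or.inl rfl
    · exact Or.inr rfl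

lemma vWeight_S (fE : Sym2 (Vt n k) → ℕ) (i : Fin n) (j : Fin 2) :
    vWeight (fanGraph n k) fE (S (i,j)) =
      fE s(C, S (i,j)) + fE s(S (i,0), S (i,1)) + ∑ t : Fin k, fE s(S (i,j), P (i,j) t) := by
  rw [vWeight, sum_edges]
  congr 1
  · congr 1
    · rw [Finset.sum_eq_single_of_mem ((i,j) : Fin n × Fin 2) (Finset.mem_univ _)]
      · rw [if_pos]
        simp [Sym2.mem_iff, C, S]
      · intro b _ hb
        rw [if_neg]
        simp only [Sym2.mem_iff, C, S, Sum.inl.injEq, Option.some.injEq]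
        push_neg
        exact ⟨by simp, fun h => absurd h.symm hb⟩
    · rw [Finset.sum_eq_single_of_mem i (Finset.mem_univ _)]
      · rw [if_pos]
        rw [Sym2.mem_iff, mem_tri_iff]
      · intro b _ hb
        rw [if_neg]
        rw [Sym2.mem_iff, mem_tri_iff]
        exact fun h => absurd h hb
  · rw [Fintype.sum_prod_type]
    rw [Finset.sum_eq_single_of_mem ((i,j) : Fin n × Fin 2) (Finset.mem_univ _)]
    · apply Finset.sum_congr rfl
      intro t _
      rw [if_pos]
      simp [Sym2.mem_iff, C, S, P]
    · intro b _ hb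
      apply Finset.sum_eq_zero
      intro t _
      rw [if_neg]
      simp only [Sym2.mem_iff, C, S, P, Sum.inl.injEq, Option.some.injEq]
      push_neg
      exact ⟨fun h => absurd h.symm hb, by simp⟩


section TL

variable {n k : ℕ} {fV : Vt n k → ℕ} {fE : Sym2 (Vt n k) → ℕ}

/-- The top label `p + q`. -/
def L (n k : ℕ) : ℕ := 1 + 5 * n + 4 * n * k

lemma L_eq : Fintype.card (Vt n k) + (fanGraph n k).edgeFinset.card = L n k := by
  rw [card_Vt, card_edgeFinset, L]; ring

lemma spoke_mem (w : Fin n × Fin 2) : s(C, S w) ∈ (fanGraph n k).edgeSet :=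
  ((fanGraph n k).mem_edgeSet).mpr (adj_CS w)

lemma tri_mem (i : Fin n) : s(S (i,0), S (i,1)) ∈ (fanGraph n k).edgeSet :=
  ((fanGraph n k).mem_edgeSet).mpr (adj_SS i)

lemma pend_mem (w : Fin n × Fin 2) (t : Fin k) : s(S w, P w t) ∈ (fanGraph n k).edgeSet :=
  ((fanGraph n k).mem_edgeSet).mpr (adj_SP w t)

lemma eWeight_mem_Tset (fV : Vt n k → ℕ) (e : Sym2 (Vt n k)) (he : e ∈ (fanGraph n k).edgeSet) :
    eWeight fV e ∈ Finset.image (vWeight (fanGraph n k) fE) Finset.univ ∪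
      Finset.image (eWeight fV) (fanGraph n k).edgeFinset :=
  Finset.mem_union_right _ (Finset.mem_image_of_mem _
    (SimpleGraph.mem_edgeFinset.mpr he))

variable (hT : IsTotalLabeling (fanGraph n k) fV fE)
include hT

lemma fV_mem (x : Vt n k) : fV x ∈ Set.Icc 1 (L n k) := by
  rw [← L_eq, ← hT.2]
  exact ⟨Sum.inl x, rfl⟩

lemma fE_mem {e : Sym2 (Vt n k)} (he : e ∈ (fanGraph n k).edgeSet) :
    fE e ∈ Set.Icc 1 (L n k) := by
  rw [← L_eq, ← hT.2]
  exact ⟨Sum.inr ⟨e, he⟩, rfl⟩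

lemma fV_inj : Function.Injective fV := fun a b h => by
  have := hT.1 (a₁ := Sum.inl a) (a₂ := Sum.inl b) h
  simpa using this

lemma fE_injOn {e₁ e₂ : Sym2 (Vt n k)} (h₁ : e₁ ∈ (fanGraph n k).edgeSet)
    (h₂ : e₂ ∈ (fanGraph n k).edgeSet) (h : fE e₁ = fE e₂) : e₁ = e₂ := by
  have := hT.1 (a₁ := Sum.inr ⟨e₁, h₁⟩) (a₂ := Sum.inr ⟨e₂, h₂⟩) h
  simpa using this

lemma fV_ne_fE (x : Vt n k) {e : Sym2 (Vt n k)} (he : e ∈ (fanGraph n k).edgeSet) :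
    fV x ≠ fE e := fun h => by
  have := hT.1 (a₁ := Sum.inl x) (a₂ := Sum.inr ⟨e, he⟩) h
  simp at this

omit hT

lemma vWeight_mem_Tset (fV : Vt n k → ℕ) (v : Vt n k) :
    vWeight (fanGraph n k) fE v ∈ Finset.image (vWeight (fanGraph n k) fE) Finset.univ ∪
      Finset.image (eWeight fV) (fanGraph n k).edgeFinset :=
  Finset.mem_union_left _ (Finset.mem_image_of_mem _ (Finset.mem_univ v))

/-- Incident edges of a support vertex. -/
noncomputable def inc (n k : ℕ) (i : Fin n) (j : Fin 2) : Finset (Sym2 (Vt n k)) :=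
  insert s(C, S (i,j)) (insert s(S (i,0), S (i,1))
    (Finset.univ.image fun t : Fin k => s(S (i,j), P (i,j) t)))

lemma spoke_ne_tri (i i' : Fin n) (j : Fin 2) :
    s(C, S (i,j)) ≠ (s(S (i',0), S (i',1)) : Sym2 (Vt n k)) := by
  simp [Sym2.eq, Sym2.rel_iff', Prod.swap_prod_mk, C, S]

lemma spoke_ne_pend (i : Fin n) (j : Fin 2) (w : Fin n × Fin 2) (t : Fin k) :
    s(C, S (i,j)) ≠ (s(S w, P w t) : Sym2 (Vt n k)) := by
  simp [Sym2.eq, Sym2.rel_iff', Prod.swap_prod_mk, C, S, P]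

lemma tri_ne_pend (i : Fin n) (w : Fin n × Fin 2) (t : Fin k) :
    s(S (i,0), S (i,1)) ≠ (s(S w, P w t) : Sym2 (Vt n k)) := by
  simp [Sym2.eq, Sym2.rel_iff', Prod.swap_prod_mk, C, S, P]

lemma pend_inj' (i : Fin n) (j : Fin 2) :
    Function.Injective (fun t : Fin k => (s(S (i,j), P (i,j) t) : Sym2 (Vt n k))) := by
  intro a b h
  have := pend_inj (n := n) (k := k) (a₁ := ((i,j), a)) (a₂ := ((i,j), b)) h
  simpa using this

lemma notmem_tri_pends (i : Fin n) (j : Fin 2) : s(S (i,0), S (i,1))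
    ∉ (Finset.univ.image fun t : Fin k => s(S (i,j), P (i,j) t)) := by
  simp only [Finset.mem_image, Finset.mem_univ, true_and, not_exists]
  exact fun t => (tri_ne_pend i (i,j) t).symm

lemma notmem_spoke_rest (i : Fin n) (j : Fin 2) : s(C, S (i,j)) ∉ insert s(S (i,0), S (i,1))
    (Finset.univ.image fun t : Fin k => s(S (i,j), P (i,j) t)) := by
  simp only [Finset.mem_insert, Finset.mem_image, Finset.mem_univ, true_and, not_or,
    not_exists]
  exact ⟨spoke_ne_tri i i j, fun t => (spoke_ne_pend i j (i,j) t).symm⟩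

lemma card_inc (i : Fin n) (j : Fin 2) : (inc n k i j).card = k + 2 := by
  rw [inc, Finset.card_insert_of_notMem (notmem_spoke_rest i j),
    Finset.card_insert_of_notMem (notmem_tri_pends i j),
    Finset.card_image_of_injective _ (pend_inj' i j)]
  simp

lemma inc_subset (i : Fin n) (j : Fin 2) :
    ∀ e ∈ inc n k i j, e ∈ (fanGraph n k).edgeSet := by
  intro e he
  rw [inc, Finset.mem_insert, Finset.mem_insert] at he
  rcases he with rfl | rfl | he
  · exact spoke_mem (i,j)
  · exact tri_mem i
  · obtain ⟨t, _, rfl⟩ := Finset.mem_image.mp he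
    exact pend_mem (i,j) t

lemma vWeight_S_inc (fE : Sym2 (Vt n k) → ℕ) (i : Fin n) (j : Fin 2) :
    vWeight (fanGraph n k) fE (S (i,j)) = ∑ e ∈ inc n k i j, fE e := by
  rw [vWeight_S, inc, Finset.sum_insert (notmem_spoke_rest i j),
    Finset.sum_insert (notmem_tri_pends i j),
    Finset.sum_image (fun a _ b _ h => pend_inj' i j h)]
  ring

include hT

lemma two_vWeight_C_ge (hn : 1 ≤ n) :
    2 * n * (2 * n + 1) ≤ 2 * vWeight (fanGraph n k) fE C := by
  have hginj : Function.Injective fun w : Fin n × Fin 2 => fE s(C, S w) := by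
    intro a b h
    exact spoke_inj (fE_injOn hT (spoke_mem a) (spoke_mem b) h)
  have hsum : vWeight (fanGraph n k) fE C
      = ∑ x ∈ Finset.univ.image (fun w : Fin n × Fin 2 => fE s(C, S w)), x := by
    rw [vWeight_C, Finset.sum_image (fun a _ b _ h => hginj h)]
  have hcard : (Finset.univ.image (fun w : Fin n × Fin 2 => fE s(C, S w))).card = 2 * n := by
    rw [Finset.card_image_of_injective _ hginj]
    simp [Fintype.card_prod, mul_comm]
  have hge := sum_ge_of_all_ge 1 (Finset.univ.image (fun w : Fin n × Fin 2 => fE s(C, S w)))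
    (by
      intro x hx
      obtain ⟨w, _, rfl⟩ := Finset.mem_image.mp hx
      exact (fE_mem hT (spoke_mem w)).1)
  have hg := gauss_ge 1 (2 * n)
  rw [hcard] at hge
  have h2n : 2 * n * (2 * n - 1) + 2 * (2 * n) * 1 = 2 * n * (2 * n + 1) := by
    have : 2 * n - 1 + 1 = 2 * n := by omega
    nlinarith [this]
  omega

lemma two_vWeight_S_le (hn : 1 ≤ n) (i : Fin n) (j : Fin 2) :
    2 * vWeight (fanGraph n k) fE (S (i,j)) + (k + 2) * (k + 1) ≤ 2 * (k + 2) * L n k := by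
  have hk4 : k ≤ 4 * n * k := Nat.le_mul_of_pos_left k (by omega)
  have hLk : k + 2 ≤ L n k + 1 := by rw [L]; omega
  have hinjOn : ∀ a ∈ inc n k i j, ∀ b ∈ inc n k i j, fE a = fE b → a = b :=
    fun a ha b hb h => fE_injOn hT (inc_subset i j a ha) (inc_subset i j b hb) h
  have hsum : vWeight (fanGraph n k) fE (S (i,j)) = ∑ x ∈ (inc n k i j).image fE, x := by
    rw [vWeight_S_inc, Finset.sum_image hinjOn]
  have hcard : ((inc n k i j).image fE).card = k + 2 := by
    rw [Finset.card_image_of_injOn hinjOn, card_inc]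
  have hle := sum_le_of_all_le (L n k) ((inc n k i j).image fE) (by
    intro x hx
    obtain ⟨e, he, rfl⟩ := Finset.mem_image.mp hx
    exact (fE_mem hT (inc_subset i j e he)).2)
  have hg := gauss_le (L n k) (k + 2) hLk
  have e' : k + 2 - 1 = k + 1 := by omega
  rw [e'] at hg
  rw [hcard] at hle
  omega

/-- The weight of a support vertex exceeds each incident edge label by at least 3. -/
lemma support_plus3 (hk : 1 ≤ k) (i : Fin n) (j : Fin 2) {e : Sym2 (Vt n k)}
    (he : e ∈ inc n k i j) :
    fE e + 3 ≤ vWeight (fanGraph n k) fE (S (i,j)) := by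
  have hinjOn : ∀ a ∈ inc n k i j, ∀ b ∈ inc n k i j, fE a = fE b → a = b :=
    fun a ha b hb h => fE_injOn hT (inc_subset i j a ha) (inc_subset i j b hb) h
  have hsum : vWeight (fanGraph n k) fE (S (i,j)) = ∑ x ∈ (inc n k i j).image fE, x := by
    rw [vWeight_S_inc, Finset.sum_image hinjOn]
  have hcard : ((inc n k i j).image fE).card = k + 2 := by
    rw [Finset.card_image_of_injOn hinjOn, card_inc]
  have hmem : fE e ∈ (inc n k i j).image fE := Finset.mem_image_of_mem _ he
  have hsplit : ∑ x ∈ (inc n k i j).image fE, x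
      = fE e + ∑ x ∈ ((inc n k i j).image fE).erase (fE e), x :=
    (Finset.add_sum_erase _ id hmem).symm
  have hec : (((inc n k i j).image fE).erase (fE e)).card = k + 1 := by
    rw [Finset.card_erase_of_mem hmem, hcard]
    omega
  have hge := sum_ge_of_all_ge 1 (((inc n k i j).image fE).erase (fE e)) (by
    intro x hx
    obtain ⟨e', he', rfl⟩ := Finset.mem_image.mp (Finset.mem_of_mem_erase hx)
    exact (fE_mem hT (inc_subset i j e' he')).1)
  rw [hec] at hge
  have h3 : ∑ i ∈ Finset.range 2, (1 + i) ≤ ∑ i ∈ Finset.range (k + 1), (1 + i) :=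
    Finset.sum_le_sum_of_subset (Finset.range_subset_range.mpr (by omega))
  have h2 : ∑ i ∈ Finset.range 2, (1 + i) = 3 := by decide
  omega

/-- The center outweighs every support vertex. -/
lemma center_gt_support (hn : 1 ≤ n) (hk : 1 ≤ k)
    (h3 : 2 * n * (2 * n + 1) + (k + 2) * (k - 1) > 2 * n * (k + 2) * (4 * k + 5))
    (i : Fin n) (j : Fin 2) :
    vWeight (fanGraph n k) fE (S (i,j)) < vWeight (fanGraph n k) fE C := by
  obtain ⟨m, rfl⟩ : ∃ m, k = m + 1 := ⟨k - 1, by omega⟩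
  have hC := two_vWeight_C_ge hT hn
  have hS := two_vWeight_S_le hT hn i j
  have e1 : 2 * (m + 1 + 2) * L n (m + 1)
      = 2 * (m + 1 + 2) + 2 * n * (m + 1 + 2) * (4 * (m + 1) + 5) := by
    rw [L]; ring
  have e2 : (m + 1 + 2) * (m + 1 + 1) = (m + 1 + 2) * ((m + 1) - 1) + 2 * (m + 1 + 2) := by
    simp only [Nat.add_sub_cancel]
    ring
  have e3 : (m + 1 + 2) * ((m + 1) - 1) = (m + 1 + 2) * m := by
    simp only [Nat.add_sub_cancel]
  rw [e3] at h3 e2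
  linarith

/-- The center's weight exceeds the largest label. -/
lemma center_gt_L (hn : 1 ≤ n) (hk : 1 ≤ k)
    (h3 : 2 * n * (2 * n + 1) + (k + 2) * (k - 1) > 2 * n * (k + 2) * (4 * k + 5)) :
    L n k < vWeight (fanGraph n k) fE C := by
  obtain ⟨m, rfl⟩ : ∃ m, k = m + 1 := ⟨k - 1, by omega⟩
  have hC := two_vWeight_C_ge hT hn
  simp only [Nat.add_sub_cancel] at h3
  have e1 : 2 * n * (m + 1 + 2) * (4 * (m + 1) + 5) = 8*n*m*m + 42*n*m + 54*n := by
    ring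
  have f1 : m * m ≤ 8 * n * m * m := by nlinarith
  have f2 : 3 * m + 8 * n * m ≤ 42 * n * m := by nlinarith
  have eL : 2 * L n (m + 1) = 2 + 18 * n + 8 * n * m := by rw [L]; ring
  have e2 : (m + 1 + 2) * m = m * m + 3 * m := by ring
  have key : 2 * L n (m + 1) + 1 ≤ 2 * n * (2 * n + 1) := by nlinarith
  linarith

end TL

section LowerBound

variable {n k : ℕ} {fV : Vt n k → ℕ} {fE : Sym2 (Vt n k) → ℕ}

lemma eWeight_mk (fV : Vt n k → ℕ) (a b : Vt n k) : eWeight fV s(a, b) = fV a + fV b := rfl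

lemma edge_cases {e : Sym2 (Vt n k)} (he : e ∈ (fanGraph n k).edgeSet) :
    (∃ w, e = s(C, S w)) ∨ (∃ i : Fin n, e = s(S (i,0), S (i,1))) ∨
      (∃ w t, e = s(S w, P w t)) := by
  have : e ∈ (fanGraph n k).edgeFinset := SimpleGraph.mem_edgeFinset.mpr he
  rw [edgeFinset_eq] at this
  simp only [Finset.mem_union, E1, E2, E3, Finset.mem_image, Finset.mem_univ, true_and]
    at this
  rcases this with (⟨w, rfl⟩ | ⟨i, rfl⟩) | ⟨wt, rfl⟩
  · exact Or.inl ⟨w, rfl⟩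
  · exact Or.inr (Or.inl ⟨i, rfl⟩)
  · exact Or.inr (Or.inr ⟨wt.1, wt.2, rfl⟩)

theorem lower_bound (hn : 1 ≤ n) (hk : 1 ≤ k)
    (h3 : 2 * n * (2 * n + 1) + (k + 2) * (k - 1) > 2 * n * (k + 2) * (4 * k + 5))
    (hA : IsLocalTotalAntimagic (fanGraph n k) fV fE) :
    2 * n * k + 2 ≤ weightCount (fanGraph n k) fV fE := by
  classical
  obtain ⟨hT, hVV, hEE, hVE⟩ := hA
  set T := Finset.image (vWeight (fanGraph n k) fE) Finset.univ ∪
    Finset.image (eWeight fV) (fanGraph n k).edgeFinset with hTdef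
  have hwc : weightCount (fanGraph n k) fV fE = T.card := rfl
  rw [hwc]
  by_contra hcon
  push_neg at hcon
  have hTcard : T.card ≤ 2 * n * k + 1 := by omega
  -- the pendant weights
  set Spend : Finset ℕ := Finset.univ.image
    (fun wt : (Fin n × Fin 2) × Fin k => vWeight (fanGraph n k) fE (P wt.1 wt.2)) with hSpend
  have hpinj : Function.Injective
      (fun wt : (Fin n × Fin 2) × Fin k => vWeight (fanGraph n k) fE (P wt.1 wt.2)) := by
    intro a b h
    simp only [vWeight_P] at h
    exact pend_inj (fE_injOn hT (pend_mem a.1 a.2) (pend_mem b.1 b.2) (by simpa using h))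
  have hcprod : Fintype.card ((Fin n × Fin 2) × Fin k) = 2 * n * k := by
    simp only [Fintype.card_prod, Fintype.card_fin]
    ring
  have hScard : Spend.card = 2 * n * k := by
    rw [hSpend, Finset.card_image_of_injective _ hpinj, Finset.card_univ, hcprod]
  have hSle : ∀ x ∈ Spend, x ≤ L n k := by
    intro x hx
    obtain ⟨wt, _, rfl⟩ := Finset.mem_image.mp hx
    rw [vWeight_P]
    exact (fE_mem hT (pend_mem wt.1 wt.2)).2
  set wC : ℕ := vWeight (fanGraph n k) fE C with hwC
  have hLwC : L n k < wC := center_gt_L hT hn hk h3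
  have hwCS : wC ∉ Spend := fun h => absurd (hSle _ h) (by omega)
  have hsub : insert wC Spend ⊆ T := by
    intro x hx
    rcases Finset.mem_insert.mp hx with rfl | hx
    · exact vWeight_mem_Tset fV C
    · obtain ⟨wt, _, rfl⟩ := Finset.mem_image.mp hx
      exact vWeight_mem_Tset fV _
  have hicard : (insert wC Spend).card = 2 * n * k + 1 := by
    rw [Finset.card_insert_of_notMem hwCS, hScard]
  have hTeq : insert wC Spend = T :=
    Finset.eq_of_subset_of_card_le hsub (le_of_le_of_eq hTcard hicard.symm)
  have hTmem : ∀ x ∈ T, x = wC ∨ ∃ wt : (Fin n × Fin 2) × Fin k,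
      x = fE s(S wt.1, P wt.1 wt.2) := by
    intro x hx
    rw [← hTeq] at hx
    rcases Finset.mem_insert.mp hx with rfl | hx
    · exact Or.inl rfl
    · obtain ⟨wt, _, rfl⟩ := Finset.mem_image.mp hx
      exact Or.inr ⟨wt, by rw [vWeight_P]⟩
  have hLbig : 2 * n * k + 1 ≤ L n k := by
    rw [L]
    have h1 : 2 * (2 * n * k) = 4 * n * k := by ring
    have h2 : 2 * k ≤ 4 * n * k := by nlinarith
    omega
  -- pigeonhole for the minimal index j*
  set Dset : Finset ℕ := (Finset.range (2 * n * k + 1)).filter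
    (fun j => ¬ ∃ wt : (Fin n × Fin 2) × Fin k,
      fV (P wt.1 wt.2) = L n k - j ∧ eWeight fV s(S wt.1, P wt.1 wt.2) = wC) with hDset
  have hDne : Dset.Nonempty := by
    by_contra hD
    rw [Finset.not_nonempty_iff_eq_empty, Finset.filter_eq_empty_iff] at hD
    have hall : ∀ j : Fin (2 * n * k + 1), ∃ wt : (Fin n × Fin 2) × Fin k,
        fV (P wt.1 wt.2) = L n k - j.val := by
      intro j
      have := hD (Finset.mem_range.mpr j.isLt)
      rw [not_not] at this
      obtain ⟨wt, h1, _⟩ := this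
      exact ⟨wt, h1⟩
    choose g hg using hall
    have hginj : Function.Injective g := by
      intro a b h
      have ha := hg a
      have hb := hg b
      rw [h, hb] at ha
      have hav : a.val ≤ 2 * n * k := by omega
      have hbv : b.val ≤ 2 * n * k := by omega
      exact Fin.ext (by omega)
    have := Fintype.card_le_of_injective g hginj
    rw [hcprod, Fintype.card_fin] at this
    omega
  set js : ℕ := Dset.min' hDne with hjs
  have hjsmem : js ∈ Dset := Dset.min'_mem hDne
  have hjsr : js ≤ 2 * n * k := by
    have := (Finset.mem_filter.mp hjsmem).1
    simpa [Finset.mem_range, Nat.lt_succ_iff] using this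
  have hjsP : ¬ ∃ wt : (Fin n × Fin 2) × Fin k,
      fV (P wt.1 wt.2) = L n k - js ∧ eWeight fV s(S wt.1, P wt.1 wt.2) = wC :=
    (Finset.mem_filter.mp hjsmem).2
  have hlt : ∀ j < js, ∃ wt : (Fin n × Fin 2) × Fin k,
      fV (P wt.1 wt.2) = L n k - j := by
    intro j hj
    have hjr : j ∈ Finset.range (2 * n * k + 1) := Finset.mem_range.mpr (by omega)
    have hnm : j ∉ Dset := fun h => absurd (Dset.min'_le j h) (by omega)
    rw [hDset, Finset.mem_filter, not_and] at hnm
    have := hnm hjr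
    rw [not_not] at this
    obtain ⟨wt, h1, _⟩ := this
    exact ⟨wt, h1⟩
  -- every edge label is at most L - js
  have hEdge : ∀ e ∈ (fanGraph n k).edgeSet, fE e ≤ L n k - js := by
    intro e he
    by_contra hbig
    push_neg at hbig
    have h1 : fE e ≤ L n k := (fE_mem hT he).2
    obtain ⟨wt, hwt⟩ := hlt (L n k - fE e) (by omega)
    have : fV (P wt.1 wt.2) = fE e := by omega
    exact fV_ne_fE hT _ he this
  set ℓ : ℕ := L n k - js with hℓ
  have hℓ1 : 1 ≤ ℓ := by omega
  have hℓL : ℓ ≤ L n k := by omega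
  -- some element carries label ℓ
  have hsurj : ∃ z : Vt n k ⊕ (fanGraph n k).edgeSet,
      Sum.elim fV (fun e : (fanGraph n k).edgeSet => fE e.1) z = ℓ := by
    have : ℓ ∈ Set.Icc 1 (Fintype.card (Vt n k) + (fanGraph n k).edgeFinset.card) := by
      rw [L_eq]; exact ⟨hℓ1, hℓL⟩
    rw [← hT.2] at this
    exact this
  obtain ⟨z, hz⟩ := hsurj
  -- helper: anything in T strictly above ℓ must be wC
  have hnotin : ∀ b ∈ T, ℓ < b → b ≠ wC → False := by
    intro b hb hbℓ hbC
    rcases hTmem b hb with rfl | ⟨wt, rfl⟩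
    · exact hbC rfl
    · exact absurd (hEdge _ (pend_mem wt.1 wt.2)) (by omega)
  rcases z with x | ⟨e, he⟩
  · -- label ℓ is on a vertex
    simp only [Sum.elim_inl] at hz
    rcases x with (_ | w) | wt
    · -- the centre
      set w0 : Fin n × Fin 2 := (⟨0, hn⟩, 0) with hw0
      have hb : eWeight fV s(C, S w0) = fV C + fV (S w0) := eWeight_mk fV _ _
      refine hnotin _ (eWeight_mem_Tset fV _ (spoke_mem w0)) ?_ ?_
      · have := (fV_mem hT (S w0)).1
        have hzC : fV C = ℓ := hz
        rw [hb, hzC]; omega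
      · exact fun h => (hVE C _ (spoke_mem w0) (Sym2.mem_mk_left _ _) h.symm)
    · -- a support vertex
      have hb : eWeight fV s(C, S w) = fV C + fV (S w) := eWeight_mk fV _ _
      refine hnotin _ (eWeight_mem_Tset fV _ (spoke_mem w)) ?_ ?_
      · have := (fV_mem hT C).1
        have hzS : fV (S w) = ℓ := hz
        rw [hb, hzS]; omega
      · exact fun h => (hVE C _ (spoke_mem w) (Sym2.mem_mk_left _ _) h.symm)
    · -- a pendant vertex
      obtain ⟨w, t⟩ := wt
      have hb : eWeight fV s(S w, P w t) = fV (S w) + fV (P w t) := eWeight_mk fV _ _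
      have hzP : fV (P w t) = ℓ := hz
      by_cases hc : eWeight fV s(S w, P w t) = wC
      · exact hjsP ⟨(w, t), hzP, hc⟩
      · refine hnotin _ (eWeight_mem_Tset fV _ (pend_mem w t)) ?_ hc
        have := (fV_mem hT (S w)).1
        rw [hb, hzP]; omega
  · -- label ℓ is on an edge
    simp only [Sum.elim_inr] at hz
    have hb3 : ∀ i j, e ∈ inc n k i j → False := by
      intro i j hmemij
      refine hnotin _ (vWeight_mem_Tset fV (S (i,j))) ?_ ?_
      · have := support_plus3 hT hk i j hmemij
        omega
      · exact ne_of_lt (center_gt_support hT hn hk h3 i j)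
    rcases edge_cases he with ⟨w, rfl⟩ | ⟨i, rfl⟩ | ⟨w, t, rfl⟩
    · exact hb3 w.1 w.2 (by
        rw [inc]
        have : (w.1, w.2) = w := Prod.mk.eta
        rw [this]
        exact Finset.mem_insert_self _ _)
    · exact hb3 i 0 (by
        rw [inc]
        exact Finset.mem_insert_of_mem (Finset.mem_insert_self _ _))
    · exact hb3 w.1 w.2 (by
        rw [inc]
        refine Finset.mem_insert_of_mem (Finset.mem_insert_of_mem ?_)
        refine Finset.mem_image.mpr ⟨t, Finset.mem_univ t, ?_⟩
        rw [Prod.mk.eta])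

end LowerBound

section Construction

variable {n k : ℕ}

/-- `p`, the number of vertices. -/
def pp (n k : ℕ) : ℕ := 1 + 2 * n + 2 * n * k

/-- The vertex labeling. -/
def gV (n k : ℕ) : Vt n k → ℕ
  | Sum.inl none => 1
  | Sum.inl (some (i, j)) => 2 + 2 * i.val + j.val
  | Sum.inr ((i, j), t) => 2 + 2 * n + (2 * i.val + j.val) * k + t.val

/-- Half of the edge labeling. -/
def gh (n k : ℕ) : Vt n k → Vt n k → ℕ
  | Sum.inl none, Sum.inl (some (i, j)) => pp n k + 1 + 2 * i.val + j.val
  | Sum.inl (some (i, j)), Sum.inl (some (i', j')) =>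
      if i = i' ∧ j.val = 0 ∧ j'.val = 1 then pp n k + 2 * n + 1 + i.val else 0
  | Sum.inl (some w), Sum.inr (w', t) =>
      if w = w' then pp n k + 3 * n + 1 + (2 * w.1.val + w.2.val) * k + t.val else 0
  | _, _ => 0

/-- The edge labeling. -/
noncomputable def gE (n k : ℕ) : Sym2 (Vt n k) → ℕ :=
  Sym2.lift ⟨fun x y => gh n k x y + gh n k y x, fun x y => by ring⟩

lemma gE_spoke (i : Fin n) (j : Fin 2) :
    gE n k s(C, S (i, j)) = pp n k + 1 + 2 * i.val + j.val := by
  show gh n k (Sum.inl none) (Sum.inl (some (i, j)))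
      + gh n k (Sum.inl (some (i, j))) (Sum.inl none) = _
  simp [gh]

lemma gE_tri (i : Fin n) :
    gE n k s(S (i, 0), S (i, 1)) = pp n k + 2 * n + 1 + i.val := by
  show gh n k (Sum.inl (some (i, 0))) (Sum.inl (some (i, 1)))
      + gh n k (Sum.inl (some (i, 1))) (Sum.inl (some (i, 0))) = _
  simp [gh]

lemma gE_pend (w : Fin n × Fin 2) (t : Fin k) :
    gE n k s(S w, P w t) = pp n k + 3 * n + 1 + (2 * w.1.val + w.2.val) * k + t.val := by
  show gh n k (Sum.inl (some w)) (Sum.inr (w, t))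
      + gh n k (Sum.inr (w, t)) (Sum.inl (some w)) = _
  simp [gh]

lemma sidx_le (i : Fin n) (j : Fin 2) : 2 * i.val + j.val + 1 ≤ 2 * n := by
  have := i.isLt
  have := j.isLt
  omega

lemma pidx_le (i : Fin n) (j : Fin 2) (t : Fin k) :
    (2 * i.val + j.val) * k + t.val + 1 ≤ 2 * n * k := by
  have h1 : 2 * i.val + j.val + 1 ≤ 2 * n := sidx_le i j
  have h2 : (2 * i.val + j.val + 1) * k ≤ 2 * n * k := Nat.mul_le_mul_right k h1
  have h3 : (2 * i.val + j.val + 1) * k = (2 * i.val + j.val) * k + k := by ring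
  have := t.isLt
  omega

lemma gV_bounds (x : Vt n k) : 1 ≤ gV n k x ∧ gV n k x ≤ pp n k := by
  rcases x with (_ | ⟨i, j⟩) | ⟨⟨i, j⟩, t⟩
  · simp only [gV, pp]
    omega
  · have := sidx_le i j
    simp only [gV, pp]
    omega
  · have := pidx_le i j t
    simp only [gV, pp]
    omega

lemma gE_bounds {e : Sym2 (Vt n k)} (he : e ∈ (fanGraph n k).edgeSet) :
    pp n k + 1 ≤ gE n k e ∧ gE n k e ≤ L n k := by
  have hL : L n k = pp n k + 3 * n + 2 * n * k := by rw [L, pp]; ring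
  rcases edge_cases he with ⟨w, rfl⟩ | ⟨i, rfl⟩ | ⟨w, t, rfl⟩
  · obtain ⟨i, j⟩ := w
    rw [gE_spoke]
    have := sidx_le i j
    omega
  · rw [gE_tri]
    have := i.isLt
    omega
  · rw [gE_pend]
    have := pidx_le w.1 w.2 t
    omega

lemma mulk_inj {a a' t t' : ℕ} (ht : t < k) (ht' : t' < k)
    (h : a * k + t = a' * k + t') : a = a' ∧ t = t' := by
  rcases Nat.lt_trichotomy a a' with hlt | rfl | hgt
  · exfalso
    have h1 : (a + 1) * k ≤ a' * k := Nat.mul_le_mul_right k hlt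
    have h2 : (a + 1) * k = a * k + k := by ring
    omega
  · omega
  · exfalso
    have h1 : (a' + 1) * k ≤ a * k := Nat.mul_le_mul_right k hgt
    have h2 : (a' + 1) * k = a' * k + k := by ring
    omega

lemma gV_inj : Function.Injective (gV n k) := by
  intro x y h
  rcases x with (_ | ⟨i, j⟩) | ⟨⟨i, j⟩, t⟩ <;> rcases y with (_ | ⟨i', j'⟩) | ⟨⟨i', j'⟩, t'⟩ <;>
    simp only [gV] at h
  · rfl
  · exfalso; have := sidx_le i' j'; omega
  · exfalso; have := pidx_le i' j' t'; omega
  · exfalso; have := sidx_le i j; omega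
  · have hj := j.isLt; have hj' := j'.isLt
    have : i.val = i'.val ∧ j.val = j'.val := by omega
    simp only [Sum.inl.injEq, Option.some.injEq, Prod.mk.injEq]
    exact ⟨Fin.ext this.1, Fin.ext this.2⟩
  · exfalso
    have := sidx_le i j
    have := pidx_le i' j' t'
    omega
  · exfalso; have := pidx_le i j t; omega
  · exfalso
    have := sidx_le i' j'
    have := pidx_le i j t
    omega
  · have h' : (2 * i.val + j.val) * k + t.val = (2 * i'.val + j'.val) * k + t'.val := by omega
    obtain ⟨h1, h2⟩ := mulk_inj t.isLt t'.isLt h'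
    have hj := j.isLt; have hj' := j'.isLt
    have : i.val = i'.val ∧ j.val = j'.val := by omega
    simp only [Sum.inr.injEq, Prod.mk.injEq]
    exact ⟨⟨Fin.ext this.1, Fin.ext this.2⟩, Fin.ext h2⟩

lemma gE_injOn {e e' : Sym2 (Vt n k)} (he : e ∈ (fanGraph n k).edgeSet)
    (he' : e' ∈ (fanGraph n k).edgeSet) (h : gE n k e = gE n k e') : e = e' := by
  rcases edge_cases he with ⟨w, rfl⟩ | ⟨i, rfl⟩ | ⟨w, t, rfl⟩ <;>
    rcases edge_cases he' with ⟨w', rfl⟩ | ⟨i', rfl⟩ | ⟨w', t', rfl⟩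
  · obtain ⟨i, j⟩ := w; obtain ⟨i', j'⟩ := w'
    rw [gE_spoke, gE_spoke] at h
    have hj := j.isLt; have hj' := j'.isLt
    have : i.val = i'.val ∧ j.val = j'.val := by omega
    rw [show (i : Fin n) = i' from Fin.ext this.1, show (j : Fin 2) = j' from Fin.ext this.2]
  · exfalso
    obtain ⟨i0, j0⟩ := w
    rw [gE_spoke, gE_tri] at h
    have := sidx_le i0 j0; have := i'.isLt
    omega
  · exfalso
    obtain ⟨i0, j0⟩ := w
    rw [gE_spoke, gE_pend] at h
    have := sidx_le i0 j0
    omega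
  · exfalso
    obtain ⟨i0, j0⟩ := w'
    rw [gE_spoke, gE_tri] at h
    have := sidx_le i0 j0; have := i.isLt
    omega
  · rw [gE_tri, gE_tri] at h
    rw [show (i : Fin n) = i' from Fin.ext (by omega)]
  · exfalso
    rw [gE_tri, gE_pend] at h
    have := i.isLt
    omega
  · exfalso
    obtain ⟨i0, j0⟩ := w'
    rw [gE_pend, gE_spoke] at h
    have := sidx_le i0 j0
    omega
  · exfalso
    rw [gE_pend, gE_tri] at h
    have := i'.isLt
    omega
  · rw [gE_pend, gE_pend] at h
    have h' : (2 * w.1.val + w.2.val) * k + t.val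
        = (2 * w'.1.val + w'.2.val) * k + t'.val := by omega
    obtain ⟨h1, h2⟩ := mulk_inj t.isLt t'.isLt h'
    have hj := w.2.isLt; have hj' := w'.2.isLt
    have hw : w = w' := by
      have : w.1.val = w'.1.val ∧ w.2.val = w'.2.val := by omega
      exact Prod.ext (Fin.ext this.1) (Fin.ext this.2)
    rw [hw, show (t : Fin k) = t' from Fin.ext h2]

lemma gTL : IsTotalLabeling (fanGraph n k) (gV n k) (gE n k) := by
  constructor
  · intro z z' h
    rcases z with x | ⟨e, he⟩ <;> rcases z' with x' | ⟨e', he'⟩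
    · simp only [Sum.elim_inl] at h
      rw [gV_inj h]
    · exfalso
      simp only [Sum.elim_inl, Sum.elim_inr] at h
      have := (gV_bounds (n := n) (k := k) x).2
      have := (gE_bounds he').1
      omega
    · exfalso
      simp only [Sum.elim_inl, Sum.elim_inr] at h
      have := (gV_bounds (n := n) (k := k) x').2
      have := (gE_bounds he).1
      omega
    · simp only [Sum.elim_inr] at h
      have := gE_injOn he he' h
      subst this
      rfl
  · rw [L_eq]
    have hinj : Function.Injective
        (Sum.elim (gV n k) (fun e : (fanGraph n k).edgeSet => gE n k e.1)) := by
      intro z z' h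
      rcases z with x | ⟨e, he⟩ <;> rcases z' with x' | ⟨e', he'⟩
      · simp only [Sum.elim_inl] at h
        rw [gV_inj h]
      · exfalso
        simp only [Sum.elim_inl, Sum.elim_inr] at h
        have := (gV_bounds (n := n) (k := k) x).2
        have := (gE_bounds he').1
        omega
      · exfalso
        simp only [Sum.elim_inl, Sum.elim_inr] at h
        have := (gV_bounds (n := n) (k := k) x').2
        have := (gE_bounds he).1
        omega
      · simp only [Sum.elim_inr] at h
        have := gE_injOn he he' h
        subst this
        rfl
    have hLpq : Fintype.card (Vt n k ⊕ (fanGraph n k).edgeSet) = L n k := by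
      rw [Fintype.card_sum]
      have : Fintype.card (fanGraph n k).edgeSet = (fanGraph n k).edgeFinset.card := by
        rw [SimpleGraph.edgeFinset, Set.toFinset_card]
      rw [this, ← L_eq]
    have hcardim : (Finset.univ.image
        (Sum.elim (gV n k) (fun e : (fanGraph n k).edgeSet => gE n k e.1))).card = L n k := by
      rw [Finset.card_image_of_injective _ hinj, Finset.card_univ, hLpq]
    have hsub : (Finset.univ.image
        (Sum.elim (gV n k) (fun e : (fanGraph n k).edgeSet => gE n k e.1)))
        ⊆ Finset.Icc 1 (L n k) := by
      intro m hm
      obtain ⟨z, _, rfl⟩ := Finset.mem_image.mp hm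
      rcases z with x | ⟨e, he⟩
      · have := gV_bounds (n := n) (k := k) x
        simp only [Sum.elim_inl, Finset.mem_Icc]
        have hppL : pp n k ≤ L n k := by
          rw [pp, L]
          have : 2 * (2 * n * k) = 4 * n * k := by ring
          omega
        omega
      · have := gE_bounds he
        simp only [Sum.elim_inr, Finset.mem_Icc]
        omega
    have heq : (Finset.univ.image
        (Sum.elim (gV n k) (fun e : (fanGraph n k).edgeSet => gE n k e.1)))
        = Finset.Icc 1 (L n k) :=
      Finset.eq_of_subset_of_card_le hsub (by rw [hcardim, Nat.card_Icc]; omega)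
    rw [← Set.image_univ, ← Finset.coe_univ, ← Finset.coe_image, heq, Finset.coe_Icc, ← L_eq]

end Construction

section Antimagic

variable {n k : ℕ}

lemma eWeight_mk' {V' : Type*} (fV : V' → ℕ) (a b : V') :
    eWeight fV s(a, b) = fV a + fV b := rfl

lemma eWeight_distinct {V' : Type*} {fV : V' → ℕ} (hf : Function.Injective fV)
    (G : SimpleGraph V') : ∀ e₁ ∈ G.edgeSet, ∀ e₂ ∈ G.edgeSet, e₁ ≠ e₂ →
    (∃ v, v ∈ e₁ ∧ v ∈ e₂) → eWeight fV e₁ ≠ eWeight fV e₂ := by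
  intro e1 _ e2 _ hne hshare heq
  obtain ⟨v, hv1, hv2⟩ := hshare
  obtain ⟨a, rfl⟩ := Sym2.mem_iff_exists.mp hv1
  obtain ⟨b, rfl⟩ := Sym2.mem_iff_exists.mp hv2
  rw [eWeight_mk', eWeight_mk'] at heq
  have : a = b := hf (by omega)
  exact hne (by rw [this])

lemma gV_C : gV n k C = 1 := rfl

lemma gV_S (i : Fin n) (j : Fin 2) : gV n k (S (i, j)) = 2 + 2 * i.val + j.val := rfl

lemma gV_P (i : Fin n) (j : Fin 2) (t : Fin k) :
    gV n k (P (i, j) t) = 2 + 2 * n + (2 * i.val + j.val) * k + t.val := rfl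

lemma eWeight_edge_le {e : Sym2 (Vt n k)} (he : e ∈ (fanGraph n k).edgeSet) :
    eWeight (gV n k) e + 1 ≤ 2 * pp n k := by
  induction e with
  | _ x y =>
    have hadj : (fanGraph n k).Adj x y := he
    have hne : x ≠ y := hadj.ne
    have hgne : gV n k x ≠ gV n k y := fun h => hne (gV_inj h)
    have h1 := gV_bounds (n := n) (k := k) x
    have h2 := gV_bounds (n := n) (k := k) y
    rw [eWeight_mk']
    omega

lemma pend_incident {w : Fin n × Fin 2} {t : Fin k} {e : Sym2 (Vt n k)}
    (he : e ∈ (fanGraph n k).edgeSet) (hv : P w t ∈ e) : e = s(S w, P w t) := by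
  rcases edge_cases he with ⟨w', rfl⟩ | ⟨i', rfl⟩ | ⟨w', t', rfl⟩
  · exfalso
    rw [Sym2.mem_iff] at hv
    simp [C, S, P] at hv
  · exfalso
    rw [Sym2.mem_iff] at hv
    simp [S, P] at hv
  · rw [Sym2.mem_iff] at hv
    rcases hv with h | h
    · exact absurd h (by simp [S, P])
    · simp only [P, Sum.inr.injEq, Prod.mk.injEq] at h
      obtain ⟨h1, h2⟩ := h
      rw [h1, h2]

lemma wS_eq (i : Fin n) (j : Fin 2) :
    vWeight (fanGraph n k) (gE n k) (S (i, j)) =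
      (pp n k + 1 + 2 * i.val + j.val) + (pp n k + 2 * n + 1 + i.val) +
        (k * (pp n k + 3 * n + 1 + (2 * i.val + j.val) * k) + ∑ t : Fin k, t.val) := by
  rw [vWeight_S, gE_spoke, gE_tri]
  congr 1
  rw [Finset.sum_congr rfl (fun t _ => gE_pend (i, j) t)]
  rw [Finset.sum_add_distrib, Finset.sum_const, Finset.card_univ, Fintype.card_fin,
    smul_eq_mul, mul_comm]

lemma wC_ge (hn : 1 ≤ n) : 2 * pp n k + 2 * n ≤ vWeight (fanGraph n k) (gE n k) C := by
  rw [vWeight_C]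
  have hper : ∀ w ∈ (Finset.univ : Finset (Fin n × Fin 2)),
      pp n k + 1 ≤ gE n k s(C, S w) := fun w _ => (gE_bounds (spoke_mem w)).1
  have hsum := Finset.sum_le_sum hper
  rw [Finset.sum_const, Finset.card_univ] at hsum
  have hcard : Fintype.card (Fin n × Fin 2) = 2 * n := by
    simp [Fintype.card_prod]
    ring
  rw [hcard, smul_eq_mul] at hsum
  have hexp : 2 * n * (pp n k + 1) = 2 * n * pp n k + 2 * n := by ring
  have hpp : 1 ≤ n → 2 * pp n k ≤ 2 * n * pp n k := by
    intro hn
    have h1 : 1 * (2 * pp n k) ≤ n * (2 * pp n k) := Nat.mul_le_mul_right _ hn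
    have h2 : n * (2 * pp n k) = 2 * n * pp n k := by ring
    omega
  have := hpp hn
  omega

theorem construction (hn : 1 ≤ n) (hk : 1 ≤ k)
    (h3 : 2 * n * (2 * n + 1) + (k + 2) * (k - 1) > 2 * n * (k + 2) * (4 * k + 5)) :
    IsLocalTotalAntimagic (fanGraph n k) (gV n k) (gE n k) := by
  have hTL : IsTotalLabeling (fanGraph n k) (gV n k) (gE n k) := gTL
  refine ⟨hTL, ?_, eWeight_distinct gV_inj _, ?_⟩
  · -- adjacent vertices have distinct weights
    intro u v hadj
    have hedge : s(u, v) ∈ (fanGraph n k).edgeSet :=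
      ((fanGraph n k).mem_edgeSet).mpr hadj
    rcases edge_cases hedge with ⟨w, hsh⟩ | ⟨i, hsh⟩ | ⟨w, t, hsh⟩ <;>
      rw [Sym2.eq_iff] at hsh
    · have hgt := center_gt_support hTL hn hk h3 w.1 w.2
      rw [Prod.mk.eta] at hgt
      rcases hsh with ⟨rfl, rfl⟩ | ⟨rfl, rfl⟩
      · exact hgt.ne'
      · exact hgt.ne
    · have e0 := wS_eq (n := n) (k := k) i 0
      have e1 := wS_eq (n := n) (k := k) i 1
      simp only [Fin.val_zero, Fin.val_one] at e0 e1
      have hkk : k * (pp n k + 3 * n + 1 + (2 * i.val + 1) * k)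
          = k * (pp n k + 3 * n + 1 + (2 * i.val + 0) * k) + k * k := by ring
      rcases hsh with ⟨rfl, rfl⟩ | ⟨rfl, rfl⟩
      · intro h
        rw [e0, e1] at h
        omega
      · intro h
        rw [e0, e1] at h
        omega
    · have hmem : s(S w, P w t) ∈ inc n k w.1 w.2 := by
        rw [inc]
        refine Finset.mem_insert_of_mem (Finset.mem_insert_of_mem ?_)
        refine Finset.mem_image.mpr ⟨t, Finset.mem_univ t, ?_⟩
        rw [Prod.mk.eta]
      have hgt := support_plus3 hTL hk w.1 w.2 hmem
      rw [Prod.mk.eta] at hgt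
      have hp : vWeight (fanGraph n k) (gE n k) (P w t) = gE n k s(S w, P w t) :=
        vWeight_P _ _ _
      rcases hsh with ⟨rfl, rfl⟩ | ⟨rfl, rfl⟩
      · intro h; omega
      · intro h; omega
  · -- vertex weight differs from incident edge weight
    intro v e he hv
    have hEle := eWeight_edge_le he
    rcases v with (_ | ⟨i, j⟩) | ⟨⟨i, j⟩, t⟩
    · have := wC_ge (n := n) (k := k) hn
      intro h
      rw [show (Sum.inl none : Vt n k) = C from rfl] at h
      omega
    · have := wS_eq (n := n) (k := k) i j
      intro h
      rw [show (Sum.inl (some (i, j)) : Vt n k) = S (i, j) from rfl] at h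
      omega
    · have hpe := pend_incident he hv
      subst hpe
      show vWeight (fanGraph n k) (gE n k) (P (i, j) t)
          ≠ eWeight (gV n k) s(S (i, j), P (i, j) t)
      rw [vWeight_P, gE_pend]
      have hoq : (2 * ((i, j) : Fin n × Fin 2).1.val + ((i, j) : Fin n × Fin 2).2.val) * k
          = (2 * i.val + j.val) * k := rfl
      rw [hoq]
      have heW : eWeight (gV n k) s(S (i, j), P (i, j) t)
          = gV n k (S (i, j)) + gV n k (P (i, j) t) := rfl
      rw [heW, gV_S, gV_P]
      have h2nk : 2 ≤ 2 * n * k := by nlinarith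
      have hi := i.isLt
      have hj := j.isLt
      rw [pp]
      omega

end Antimagic

end Aux

/-- for integers `n`, `k` with `2n ≥ k + 3 ≥ 4` and
`2n(2n+1) - 2n(k+2)(4k+5) + (k+2)(k-1) > 0`, the fan graph with pendant edges `f_n(k)`
satisfies `χ_lt(f_n(k)) ≥ 2nk + 2`. -/
theorem stmt6 (n k : ℕ) (h1 : k + 3 ≤ 2 * n) (h2 : 4 ≤ k + 3)
    (h3 : 2 * n * (2 * n + 1) + (k + 2) * (k - 1) > 2 * n * (k + 2) * (4 * k + 5)) :
    2 * n * k + 2 ≤ chiLT (fanGraph n k) := by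
  have hn : 1 ≤ n := by omega
  have hk : 1 ≤ k := by omega
  have hLTA := Aux.construction hn hk h3
  rw [chiLT]
  have hne : {m | ∃ fV fE, IsLocalTotalAntimagic (fanGraph n k) fV fE ∧
      weightCount (fanGraph n k) fV fE = m}.Nonempty :=
    ⟨weightCount (fanGraph n k) (Aux.gV n k) (Aux.gE n k),
      Aux.gV n k, Aux.gE n k, hLTA, rfl⟩
  obtain ⟨fV, fE, hA, hEq⟩ := Nat.sInf_mem hne
  rw [← hEq]
  exact Aux.lower_bound hn hk h3 hA

end LTA
end

section
/- Let G be a finite simple 2-regular graph. If G has a connected component that is a cycle of order n ≠ 6, then χ_lt(G) ≥ 4. -/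
open scoped Classical

namespace LTA

variable {V : Type*} {W : Type*}

lemma eWeight_mk (fV : V → ℕ) (a b : V) : eWeight fV s(a, b) = fV a + fV b := rfl

lemma exists_two_neighbors [Fintype V] {G : SimpleGraph V} {x : V} (hdeg : G.degree x = 2) :
    ∃ w₁ w₂, w₁ ≠ w₂ ∧ G.Adj x w₁ ∧ G.Adj x w₂ ∧ ∀ y, G.Adj x y → y = w₁ ∨ y = w₂ := by
  have h : (G.neighborFinset x).card = 2 := by
    rwa [G.card_neighborFinset_eq_degree]
  obtain ⟨w₁, w₂, hne, hset⟩ := Finset.card_eq_two.mp h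
  refine ⟨w₁, w₂, hne, ?_, ?_, ?_⟩
  · have : w₁ ∈ G.neighborFinset x := by rw [hset]; simp
    rwa [SimpleGraph.mem_neighborFinset] at this
  · have : w₂ ∈ G.neighborFinset x := by rw [hset]; simp
    rwa [SimpleGraph.mem_neighborFinset] at this
  · intro y hy
    have : y ∈ G.neighborFinset x := by rwa [SimpleGraph.mem_neighborFinset]
    rw [hset] at this
    simpa using this

lemma vWeight_eq_pair [Fintype V] {G : SimpleGraph V} (fE : Sym2 V → ℕ) {x : V}
    (hdeg : G.degree x = 2) {e₁ e₂ : Sym2 V} (h1 : e₁ ∈ G.edgeSet) (h2 : e₂ ∈ G.edgeSet)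
    (hne : e₁ ≠ e₂) (hx1 : x ∈ e₁) (hx2 : x ∈ e₂) :
    vWeight G fE x = fE e₁ + fE e₂ := by
  classical
  have hcard : (G.incidenceFinset x).card = 2 := by
    rw [SimpleGraph.card_incidenceFinset_eq_degree, hdeg]
  have hsub : ({e₁, e₂} : Finset (Sym2 V)) ⊆ G.incidenceFinset x := by
    intro e he
    rw [SimpleGraph.mem_incidenceFinset]
    rcases Finset.mem_insert.mp he with rfl | he
    · exact ⟨h1, hx1⟩
    · rw [Finset.mem_singleton] at he; subst he; exact ⟨h2, hx2⟩
  have heq : G.incidenceFinset x = {e₁, e₂} :=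
    (Finset.eq_of_subset_of_card_le hsub (by rw [hcard, Finset.card_pair hne])).symm
  have hfil : G.incidenceFinset x = G.edgeFinset.filter (fun e => x ∈ e) := by
    rw [SimpleGraph.incidenceFinset_eq_filter]
  rw [vWeight, ← Finset.sum_filter, ← hfil, heq, Finset.sum_pair hne]


lemma vWeight_of_adj2 [Fintype V] {G : SimpleGraph V} (fE : Sym2 V → ℕ) {x w₁ w₂ : V}
    (hdeg : G.degree x = 2) (hne : w₁ ≠ w₂) (h1 : G.Adj x w₁) (h2 : G.Adj x w₂) :
    vWeight G fE x = fE s(x, w₁) + fE s(x, w₂) := by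
  refine vWeight_eq_pair fE hdeg (G.mem_edgeSet.mpr h1) (G.mem_edgeSet.mpr h2) ?_
    (Sym2.mem_mk_left _ _) (Sym2.mem_mk_left _ _)
  intro h
  rcases Sym2.eq_iff.mp h with ⟨-, h'⟩ | ⟨h', -⟩
  · exact hne h'
  · exact G.ne_of_adj h2 h'

lemma exists_lta [Fintype V] (G : SimpleGraph V) (hreg : ∀ v : V, G.degree v = 2) :
    ∃ fV fE, IsLocalTotalAntimagic G fV fE := by
  classical
  set p := Fintype.card V with hp
  set q := G.edgeFinset.card with hq
  have hcardE : Fintype.card G.edgeSet = q := by rw [hq, SimpleGraph.edgeFinset_card]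
  obtain ⟨eE⟩ : Nonempty (G.edgeSet ≃ Fin q) := ⟨Fintype.equivFinOfCardEq hcardE⟩
  obtain ⟨eV⟩ : Nonempty (V ≃ Fin p) := ⟨Fintype.equivFinOfCardEq rfl⟩
  set fE : Sym2 V → ℕ := fun s => if h : s ∈ G.edgeSet then ((eE ⟨s, h⟩ : Fin q) : ℕ) + 1 else 0
    with hfE
  set fV : V → ℕ := fun v => q + 1 + ((eV v : Fin p) : ℕ) with hfV
  have hfE_eq : ∀ (e : Sym2 V) (he : e ∈ G.edgeSet), fE e = ((eE ⟨e, he⟩ : Fin q) : ℕ) + 1 := by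
    intro e he; simp [hfE, dif_pos he]
  have hfE_lb : ∀ e ∈ G.edgeSet, 1 ≤ fE e := by
    intro e he; rw [hfE_eq e he]; omega
  have hfE_ub : ∀ e ∈ G.edgeSet, fE e ≤ q := by
    intro e he; rw [hfE_eq e he]
    have := (eE ⟨e, he⟩).isLt; omega
  have hfV_lb : ∀ v : V, q + 1 ≤ fV v := by intro v; simp [hfV]
  have hfV_ub : ∀ v : V, fV v ≤ q + p := by
    intro v; have := (eV v).isLt; simp only [hfV]; omega
  have hfE_inj : ∀ e₁ ∈ G.edgeSet, ∀ e₂ ∈ G.edgeSet, fE e₁ = fE e₂ → e₁ = e₂ := by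
    intro e₁ h1 e₂ h2 h
    rw [hfE_eq e₁ h1, hfE_eq e₂ h2] at h
    have : eE ⟨e₁, h1⟩ = eE ⟨e₂, h2⟩ := Fin.ext (by omega)
    have := eE.injective this
    exact congrArg Subtype.val this
  have hfV_inj : Function.Injective fV := by
    intro a b h
    simp only [hfV] at h
    exact eV.injective (Fin.ext (by omega))
  refine ⟨fV, fE, ⟨⟨?_, ?_⟩, ?_, ?_, ?_⟩⟩
  · -- injectivity of the total labeling
    intro x y h
    match x, y with
    | Sum.inl a, Sum.inl b => simp only [Sum.elim_inl] at h; rw [hfV_inj h]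
    | Sum.inl a, Sum.inr e =>
      exfalso
      simp only [Sum.elim_inl, Sum.elim_inr] at h
      have h1 := hfV_lb a; have h2 := hfE_ub e.1 e.2; omega
    | Sum.inr e, Sum.inl a =>
      exfalso
      simp only [Sum.elim_inl, Sum.elim_inr] at h
      have h1 := hfV_lb a; have h2 := hfE_ub e.1 e.2; omega
    | Sum.inr e, Sum.inr e' =>
      simp only [Sum.elim_inr] at h
      have : e.1 = e'.1 := hfE_inj e.1 e.2 e'.1 e'.2 h
      simp [Subtype.ext this]
  · -- range
    ext m
    simp only [Set.mem_range, Sum.exists, Sum.elim_inl, Sum.elim_inr, Set.mem_Icc]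
    constructor
    · rintro (⟨a, rfl⟩ | ⟨e, rfl⟩)
      · have h1 := hfV_lb a; have h2 := hfV_ub a; omega
      · have h1 := hfE_lb e.1 e.2; have h2 := hfE_ub e.1 e.2; omega
    · rintro ⟨h1, h2⟩
      by_cases hm : m ≤ q
      · right
        refine ⟨eE.symm ⟨m - 1, by omega⟩, ?_⟩
        have he := (eE.symm ⟨m - 1, by omega⟩).2
        rw [hfE_eq _ he]
        have : (⟨(eE.symm ⟨m - 1, by omega⟩ : G.edgeSet).1, he⟩ : G.edgeSet)
            = eE.symm ⟨m - 1, by omega⟩ := rfl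
        rw [this, Equiv.apply_symm_apply]
        show (m - 1) + 1 = m
        omega
      · left
        refine ⟨eV.symm ⟨m - q - 1, by omega⟩, ?_⟩
        show q + 1 + ((eV (eV.symm ⟨m - q - 1, by omega⟩) : Fin p) : ℕ) = m
        rw [Equiv.apply_symm_apply]
        show q + 1 + (m - q - 1) = m
        omega
  · -- adjacent vertices
    intro a b hab
    obtain ⟨w₁, w₂, hw12, haw1, haw2, hcov⟩ := exists_two_neighbors (hreg a)
    obtain ⟨z₁, z₂, hz12, hbz1, hbz2, hcov'⟩ := exists_two_neighbors (hreg b)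
    obtain ⟨w, haw, hwb⟩ : ∃ w, G.Adj a w ∧ w ≠ b := by
      rcases hcov b hab with rfl | rfl
      · exact ⟨w₂, haw2, fun h => hw12 h.symm⟩
      · exact ⟨w₁, haw1, fun h => hw12 h⟩
    obtain ⟨z, hbz, hza⟩ : ∃ z, G.Adj b z ∧ z ≠ a := by
      rcases hcov' a hab.symm with rfl | rfl
      · exact ⟨z₂, hbz2, fun h => hz12 h.symm⟩
      · exact ⟨z₁, hbz1, fun h => hz12 h⟩
    rw [vWeight_of_adj2 fE (hreg a) (Ne.symm hwb) hab haw,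
      vWeight_of_adj2 fE (hreg b) (Ne.symm hza) hab.symm hbz]
    have hswap : s(b, a) = s(a, b) := Sym2.eq_swap
    rw [hswap]
    intro h
    have h' : fE s(a, w) = fE s(b, z) := by omega
    have := hfE_inj _ (G.mem_edgeSet.mpr haw) _ (G.mem_edgeSet.mpr hbz) h'
    rcases Sym2.eq_iff.mp this with ⟨h1, -⟩ | ⟨h1, h2⟩
    · exact hab.ne h1
    · exact hza h1.symm
  · -- adjacent edges
    rintro e₁ h1 e₂ h2 hne ⟨x, hx1, hx2⟩
    obtain ⟨b₁, rfl⟩ := Sym2.mem_iff_exists.mp hx1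
    obtain ⟨b₂, rfl⟩ := Sym2.mem_iff_exists.mp hx2
    have hb : b₁ ≠ b₂ := fun h => hne (by rw [h])
    show fV x + fV b₁ ≠ fV x + fV b₂
    intro h
    exact hb (hfV_inj (by omega : fV b₁ = fV b₂))
  · -- vertex vs incident edge
    intro x e he hxe
    obtain ⟨b, rfl⟩ := Sym2.mem_iff_exists.mp hxe
    obtain ⟨w₁, w₂, hw12, hxw1, hxw2, -⟩ := exists_two_neighbors (hreg x)
    rw [vWeight_of_adj2 fE (hreg x) hw12 hxw1 hxw2]
    show fE s(x, w₁) + fE s(x, w₂) ≠ fV x + fV b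
    have u1 := hfE_ub _ (G.mem_edgeSet.mpr hxw1)
    have u2 := hfE_ub _ (G.mem_edgeSet.mpr hxw2)
    have l1 := hfV_lb x
    have l2 := hfV_lb b
    omega

open Fin.NatCast Fin.CommRing in
theorem lower_bound {V : Type*} [Fintype V] (G : SimpleGraph V)
    (hreg : ∀ v : V, G.degree v = 2)
    (hcomp : ∃ c : G.ConnectedComponent, ∃ n : ℕ, n ≠ 6 ∧
      Nonempty (G.induce c.supp ≃g SimpleGraph.cycleGraph n))
    (fV : V → ℕ) (fE : Sym2 V → ℕ) (h : IsLocalTotalAntimagic G fV fE) :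
    4 ≤ weightCount G fV fE := by
  classical
  by_contra h4
  push_neg at h4
  obtain ⟨c, n, hn6, ⟨φ⟩⟩ := hcomp
  set S : Finset ℕ :=
    Finset.image (vWeight G fE) Finset.univ ∪ Finset.image (eWeight fV) G.edgeFinset with hS
  have hS3 : S.card ≤ 3 := by
    rw [hS]
    have h4' := h4
    rw [weightCount] at h4'
    omega
  have hvS : ∀ x : V, vWeight G fE x ∈ S := fun x =>
    Finset.mem_union_left _ (Finset.mem_image_of_mem _ (Finset.mem_univ x))
  -- the cycle embedding
  set v : Fin n → V := fun i => ((φ.symm i : c.supp) : V) with hv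
  have hVinj : Function.Injective v :=
    Subtype.val_injective.comp (φ.symm.toEquiv.injective)
  have hmem : ∀ i, v i ∈ c.supp := fun i => (φ.symm i).2
  -- n ≥ 3
  have hn3 : 3 ≤ n := by
    obtain ⟨a, ha⟩ := c.exists_rep
    have hamem : a ∈ c.supp := by rw [SimpleGraph.ConnectedComponent.mem_supp_iff]; exact ha
    obtain ⟨w₁, w₂, hw12, haw1, haw2, -⟩ := exists_two_neighbors (hreg a)
    have hw1mem : w₁ ∈ c.supp := by
      rw [SimpleGraph.ConnectedComponent.mem_supp_iff, ← ha]
      exact SimpleGraph.ConnectedComponent.sound haw1.symm.reachable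
    have hw2mem : w₂ ∈ c.supp := by
      rw [SimpleGraph.ConnectedComponent.mem_supp_iff, ← ha]
      exact SimpleGraph.ConnectedComponent.sound haw2.symm.reachable
    set i₀ : Fin n := φ ⟨a, hamem⟩
    set i₁ : Fin n := φ ⟨w₁, hw1mem⟩
    set i₂ : Fin n := φ ⟨w₂, hw2mem⟩
    have h01 : i₀ ≠ i₁ := fun hh => G.ne_of_adj haw1 (congrArg Subtype.val (φ.toEquiv.injective hh))
    have h02 : i₀ ≠ i₂ := fun hh => G.ne_of_adj haw2 (congrArg Subtype.val (φ.toEquiv.injective hh))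
    have h12 : i₁ ≠ i₂ := fun hh => hw12 (congrArg Subtype.val (φ.toEquiv.injective hh))
    have hcard : ({i₀, i₁, i₂} : Finset (Fin n)).card = 3 := by
      rw [Finset.card_insert_of_notMem (by simp [h01, h02]),
        Finset.card_insert_of_notMem (by simp [h12]), Finset.card_singleton]
    have := Finset.card_le_univ ({i₀, i₁, i₂} : Finset (Fin n))
    rw [hcard] at this
    simpa using this
  haveI : NeZero n := ⟨by omega⟩
  have hval1 : ((1 : Fin n) : ℕ) = 1 := by
    have : ((1 : ℕ) : Fin n) = (1 : Fin n) := by norm_cast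
    rw [← this, Fin.val_natCast, Nat.mod_eq_of_lt (by omega)]
  -- adjacency along the cycle
  have hAdjNext : ∀ i : Fin n, G.Adj (v i) (v (i + 1)) := by
    intro i
    have hc : (SimpleGraph.cycleGraph n).Adj i (i + 1) := by
      rw [SimpleGraph.cycleGraph_adj']
      right
      rw [add_sub_cancel_left, hval1]
    have := φ.symm.map_adj_iff.mpr hc
    exact this
  set E : Fin n → Sym2 V := fun i => s(v i, v (i + 1)) with hE
  have hEedge : ∀ i, E i ∈ G.edgeSet := fun i => G.mem_edgeSet.mpr (hAdjNext i)
  have heS : ∀ i, eWeight fV (E i) ∈ S := fun i =>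
    Finset.mem_union_right _
      (Finset.mem_image_of_mem _ (SimpleGraph.mem_edgeFinset.mpr (hEedge i)))
  have h2ne : (2 : Fin n) ≠ 0 := by
    have h' : ((2 : ℕ) : Fin n) = (2 : Fin n) := by norm_cast
    rw [← h', Ne, Fin.natCast_eq_zero]
    intro hdvd
    exact absurd (Nat.le_of_dvd (by norm_num) hdvd) (by omega)
  have h1ne : (1 : Fin n) ≠ 0 := by
    have h' : ((1 : ℕ) : Fin n) = (1 : Fin n) := by norm_cast
    rw [← h', Ne, Fin.natCast_eq_zero]
    intro hdvd
    exact absurd (Nat.le_of_dvd (by norm_num) hdvd) (by omega)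
  have haddcancel : ∀ x k : Fin n, x + k = x → k = 0 := by
    intro x k hxk
    calc k = x + k - x := (add_sub_cancel_left x k).symm
      _ = x - x := by rw [hxk]
      _ = 0 := sub_self x
  have hEinj : Function.Injective E := by
    intro i j hij
    rcases Sym2.eq_iff.mp hij with ⟨h1, -⟩ | ⟨h1, h2⟩
    · exact hVinj h1
    · exfalso
      have e1 : i = j + 1 := hVinj h1
      have e2 : i + 1 = j := hVinj h2
      have e3 : j + 2 = j := by
        rw [show j + 2 = j + 1 + 1 from by ring, ← e1]
        exact e2
      exact h2ne (haddcancel j 2 e3)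
  -- weight abbreviations and equations
  have hwv : ∀ i : Fin n, vWeight G fE (v (i + 1)) = fE (E i) + fE (E (i + 1)) := by
    intro i
    refine vWeight_eq_pair fE (hreg _) (hEedge i) (hEedge (i + 1))
      (fun hh => ?_) (Sym2.mem_mk_right _ _) (Sym2.mem_mk_left _ _)
    exact h1ne (haddcancel i 1 (hEinj hh).symm)
  have hwe : ∀ i : Fin n, eWeight fV (E i) = fV (v i) + fV (v (i + 1)) := fun i => rfl
  -- constraints
  have hC1 : ∀ i : Fin n, vWeight G fE (v i) ≠ vWeight G fE (v (i + 1)) :=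
    fun i => h.2.1 _ _ (hAdjNext i)
  have hC2 : ∀ i : Fin n, eWeight fV (E i) ≠ eWeight fV (E (i + 1)) := by
    intro i
    refine h.2.2.1 _ (hEedge i) _ (hEedge (i + 1))
      (fun hh => h1ne (haddcancel i 1 (hEinj hh).symm)) ?_
    exact ⟨v (i + 1), Sym2.mem_mk_right _ _, Sym2.mem_mk_left _ _⟩
  have hC3a : ∀ i : Fin n, vWeight G fE (v i) ≠ eWeight fV (E i) :=
    fun i => h.2.2.2 _ _ (hEedge i) (Sym2.mem_mk_left _ _)
  have hC3b : ∀ i : Fin n, vWeight G fE (v (i + 1)) ≠ eWeight fV (E i) :=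
    fun i => h.2.2.2 _ _ (hEedge i) (Sym2.mem_mk_right _ _)
  -- four members of a ≤3 set forces a repetition
  have htriple : ∀ x y z w : ℕ, x ∈ S → y ∈ S → z ∈ S → w ∈ S → x ≠ y → x ≠ z → y ≠ z →
      w ≠ y → w ≠ z → w = x := by
    intro x y z w hx hy hz hw hxy hxz hyz hwy hwz
    by_contra hwx
    have hsub : ({w, x, y, z} : Finset ℕ) ⊆ S := by
      intro t ht
      simp only [Finset.mem_insert, Finset.mem_singleton] at ht
      rcases ht with rfl | rfl | rfl | rfl <;> assumption
    have hcard : ({w, x, y, z} : Finset ℕ).card = 4 := by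
      rw [Finset.card_insert_of_notMem (by simp [hwx, hwy, hwz]),
        Finset.card_insert_of_notMem (by simp [hxy, hxz]),
        Finset.card_insert_of_notMem (by simp [hyz]), Finset.card_singleton]
    have := Finset.card_le_card hsub
    omega
  have id1 : ∀ i : Fin n, eWeight fV (E (i + 1)) = vWeight G fE (v i) := by
    intro i
    exact htriple _ _ _ _ (hvS (v i)) (heS i) (hvS (v (i + 1))) (heS (i + 1))
      (hC3a i) (hC1 i) (hC3b i).symm (hC2 i).symm (hC3a (i + 1)).symm
  have id2 : ∀ i : Fin n, vWeight G fE (v (i + 2)) = eWeight fV (E i) := by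
    intro i
    have n1 : i + 1 + 1 = i + 2 := by ring
    have c1 := hC1 (i + 1); rw [n1] at c1
    have c3 := hC3b (i + 1); rw [n1] at c3
    exact htriple _ _ _ _ (heS i) (hvS (v (i + 1))) (heS (i + 1)) (hvS (v (i + 2)))
      (hC3b i).symm (hC2 i) (hC3a (i + 1)) c1.symm c3
  have per : ∀ i : Fin n, vWeight G fE (v (i + 3)) = vWeight G fE (v i) := by
    intro i
    have n1 : i + 1 + 2 = i + 3 := by ring
    have h2 := id2 (i + 1); rw [n1] at h2
    rw [h2, id1 i]
  have Req : ∀ i : Fin n, fE (E i) + fE (E (i + 3)) + vWeight G fE (v (i + 2)) =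
      vWeight G fE (v (i + 1)) + vWeight G fE (v (i + 3)) := by
    intro i
    have n1 : i + 1 + 1 = i + 2 := by ring
    have n2 : i + 2 + 1 = i + 3 := by ring
    have e1 := hwv i
    have e2 := hwv (i + 1); rw [n1] at e2
    have e3 := hwv (i + 2); rw [n2] at e3
    omega
  have hu6 : ∀ i : Fin n, fE (E (i + 6)) = fE (E i) := by
    intro i
    have r1 := Req i
    have r2 := Req (i + 3)
    have n1 : i + 3 + 1 = i + 4 := by ring
    have n2 : i + 3 + 2 = i + 5 := by ring
    have n3 : i + 3 + 3 = i + 6 := by ring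
    rw [n1, n2, n3] at r2
    have p1 := per (i + 1)
    have p2 := per (i + 2)
    have p3 := per (i + 3)
    have m1 : i + 1 + 3 = i + 4 := by ring
    have m2 : i + 2 + 3 = i + 5 := by ring
    have m3 : i + 3 + 3 = i + 6 := by ring
    rw [m1] at p1; rw [m2] at p2; rw [m3] at p3
    omega
  -- fE is injective on the edges of the cycle
  have huinj : ∀ i j : Fin n, fE (E i) = fE (E j) → i = j := by
    intro i j hij
    have := h.1.1 (a₁ := Sum.inr ⟨E i, hEedge i⟩) (a₂ := Sum.inr ⟨E j, hEedge j⟩)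
      (by simpa using hij)
    have : E i = E j := congrArg Subtype.val (Sum.inr_injective this)
    exact hEinj this
  -- n divides 6
  have hdvd : n ∣ 6 := by
    have h6 := huinj _ _ (hu6 0)
    have : ((6 : ℕ) : Fin n) = 0 := by
      have h60 : (0 : Fin n) + 6 = ((6 : ℕ) : Fin n) := by
        rw [zero_add]; norm_cast
      rw [← h60, h6]
    exact Fin.natCast_eq_zero.mp this
  -- hence n = 3
  have hn3' : n = 3 := by
    rcases hdvd with ⟨k, hk⟩
    have hk1 : 1 ≤ k := by
      rcases Nat.eq_zero_or_pos k with rfl | hp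
      · omega
      · omega
    have hk2 : k ≤ 2 := by nlinarith
    interval_cases k <;> omega
  subst hn3'
  -- finish: derive fV (v 0) = fE (E 1), contradicting injectivity
  have c01 : (0 : Fin 3) + 1 = (1 : Fin 3) := rfl
  have c11 : (1 : Fin 3) + 1 = (2 : Fin 3) := rfl
  have c21 : (2 : Fin 3) + 1 = (0 : Fin 3) := rfl
  have q0 := hwv 0; rw [c01] at q0
  have q1 := hwv 1; rw [c11] at q1
  have q2 := hwv 2; rw [c21] at q2
  have f0 := hwe 0; rw [c01] at f0
  have f1 := hwe 1; rw [c11] at f1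
  have f2 := hwe 2; rw [c21] at f2
  have i0 := id1 0; rw [c01] at i0
  have i1 := id1 1; rw [c11] at i1
  have i2 := id1 2; rw [c21] at i2
  have hkey : fV (v 0) = fE (E 1) := by omega
  have := h.1.1 (a₁ := Sum.inl (v 0)) (a₂ := Sum.inr ⟨E 1, hEedge 1⟩) (by simpa using hkey)
  exact absurd this (by simp)

/-- if `G` is a 2-regular graph having a connected component which is a cycle of
order `n ≠ 6`, then `χ_lt(G) ≥ 4`. -/
theorem stmt10 {V : Type*} [Fintype V] (G : SimpleGraph V)
    (hreg : ∀ v : V, G.degree v = 2)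
    (hcomp : ∃ c : G.ConnectedComponent, ∃ n : ℕ, n ≠ 6 ∧
      Nonempty (G.induce c.supp ≃g SimpleGraph.cycleGraph n)) :
    4 ≤ chiLT G := by
  obtain ⟨fV, fE, hlta⟩ := exists_lta G hreg
  unfold chiLT
  refine le_csInf ⟨weightCount G fV fE, fV, fE, hlta, rfl⟩ ?_
  rintro b ⟨fV', fE', h', rfl⟩
  exact lower_bound G hreg hcomp fV' fE' h'

end LTA
end

section
/- For every integer m ≥ 1, the disjoint union mC_6 + P_3 of m copies of the 6-cycle and one path on 3 vertices satisfies χ_lt(mC_6 + P_3) = 4. -/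
open scoped Classical

namespace LTA

variable {V : Type*} {W : Type*}

open SimpleGraph
open SimpleGraph
open SimpleGraph

variable {m : ℕ}

abbrev VV (m : ℕ) := (Fin m × Fin 6) ⊕ Fin 3
abbrev GG (m : ℕ) : SimpleGraph (VV m) := copies m (cycleGraph 6) ⊕g pathGraph 3

lemma cyc_adj {i i' : Fin 6} : (cycleGraph 6).Adj i i' ↔ i' = i + 1 ∨ i = i' + 1 := by
  have h : (cycleGraph 6).Adj i i' ↔ i - i' = 1 ∨ i' - i = 1 := cycleGraph_adj (n := 4)
  rw [h]
  constructor
  · rintro (h|h)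
    · right; rw [sub_eq_iff_eq_add] at h; rw [h, add_comm]
    · left; rw [sub_eq_iff_eq_add] at h; rw [h, add_comm]
  · rintro (h|h)
    · right; rw [sub_eq_iff_eq_add, h, add_comm]
    · left; rw [sub_eq_iff_eq_add, h, add_comm]

lemma gg_adj_inl_inl {x y : Fin m × Fin 6} :
    (GG m).Adj (.inl x) (.inl y) ↔ x.1 = y.1 ∧ (x.2 = y.2 + 1 ∨ y.2 = x.2 + 1) := by
  show (copies m (cycleGraph 6)).Adj x y ↔ _
  show (x.1 = y.1 ∧ (cycleGraph 6).Adj x.2 y.2) ↔ _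
  rw [cyc_adj]; tauto

lemma gg_adj_inr_inr {k k' : Fin 3} :
    (GG m).Adj (.inr k) (.inr k') ↔ (k.val + 1 = k'.val ∨ k'.val + 1 = k.val) := by
  show (pathGraph 3).Adj k k' ↔ _
  exact pathGraph_adj

lemma gg_not_adj_inl_inr {x : Fin m × Fin 6} {k : Fin 3} : ¬ (GG m).Adj (.inl x) (.inr k) := by
  simp [SimpleGraph.sum_adj]

lemma gg_not_adj_inr_inl {x : Fin m × Fin 6} {k : Fin 3} : ¬ (GG m).Adj (.inr k) (.inl x) := by
  simp [SimpleGraph.sum_adj]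

lemma nf_inl (x : Fin m × Fin 6) :
    (GG m).neighborFinset (.inl x) = {.inl (x.1, x.2 - 1), .inl (x.1, x.2 + 1)} := by
  ext w
  rw [SimpleGraph.mem_neighborFinset]
  cases w with
  | inl y =>
    rw [gg_adj_inl_inl]
    simp only [Finset.mem_insert, Finset.mem_singleton, Sum.inl.injEq]
    constructor
    · rintro ⟨h1, (h2|h2)⟩
      · left; rw [Prod.ext_iff]
        exact ⟨h1.symm, by rw [eq_sub_iff_add_eq]; exact h2.symm⟩
      · right; rw [Prod.ext_iff]; exact ⟨h1.symm, h2⟩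
    · rintro (h|h) <;> rw [h]
      · exact ⟨rfl, Or.inl (sub_add_cancel _ _).symm⟩
      · exact ⟨rfl, Or.inr rfl⟩
  | inr k =>
    simp only [Finset.mem_insert, Finset.mem_singleton]
    constructor
    · intro h; exact absurd h gg_not_adj_inl_inr
    · rintro (h|h) <;> simp_all

lemma nf_inr0 : (GG m).neighborFinset (.inr 0) = {.inr 1} := by
  ext w
  rw [SimpleGraph.mem_neighborFinset]
  cases w with
  | inl y => simpa using gg_not_adj_inr_inl
  | inr k =>
    rw [gg_adj_inr_inr]
    simp only [Finset.mem_singleton, Sum.inr.injEq]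
    constructor
    · intro h; apply Fin.ext; omega
    · rintro rfl; left; rfl

lemma nf_inr1 : (GG m).neighborFinset (.inr 1) = {.inr 0, .inr 2} := by
  ext w
  rw [SimpleGraph.mem_neighborFinset]
  cases w with
  | inl y => simpa using gg_not_adj_inr_inl
  | inr k =>
    rw [gg_adj_inr_inr]
    simp only [Finset.mem_insert, Finset.mem_singleton, Sum.inr.injEq]
    constructor
    · intro h
      rcases h with h|h
      · right; apply Fin.ext; simpa using by omega
      · left; apply Fin.ext; simpa using by omega
    · rintro (rfl|rfl)
      · right; rfl
      · left; rfl

lemma nf_inr2 : (GG m).neighborFinset (.inr 2) = {.inr 1} := by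
  ext w
  rw [SimpleGraph.mem_neighborFinset]
  cases w with
  | inl y => simpa using gg_not_adj_inr_inl
  | inr k =>
    rw [gg_adj_inr_inr]
    simp only [Finset.mem_singleton, Sum.inr.injEq]
    constructor
    · intro h; apply Fin.ext; omega
    · rintro rfl; right; rfl

open SimpleGraph

lemma vWeight_eq {V : Type*} [Fintype V] (G : SimpleGraph V) [G.LocallyFinite] (fE : Sym2 V → ℕ) (v : V) :
    vWeight G fE v = ∑ w ∈ G.neighborFinset v, fE s(v, w) := by
  classical
  rw [vWeight, ← Finset.sum_filter]
  have hfilter : G.edgeFinset.filter (fun e => v ∈ e) =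
      (G.neighborFinset v).image (fun w => s(v, w)) := by
    ext e
    rw [Finset.mem_filter, Finset.mem_image]
    constructor
    · rintro ⟨he, hv⟩
      obtain ⟨w, rfl⟩ := Sym2.mem_iff_exists.mp hv
      exact ⟨w, by rwa [mem_neighborFinset, ← mem_edgeSet, ← mem_edgeFinset], rfl⟩
    · rintro ⟨w, hw, rfl⟩
      rw [mem_neighborFinset] at hw
      exact ⟨by rwa [mem_edgeFinset, mem_edgeSet], Sym2.mem_mk_left v w⟩
  rw [hfilter, Finset.sum_image]
  intro w hw w' hw' h
  rw [Sym2.congr_right] at h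
  exact h

lemma incidence_decomp {V : Type*} (G : SimpleGraph V) {e : Sym2 V} {v : V}
    (he : e ∈ G.edgeSet) (hv : v ∈ e) : ∃ w, e = s(v, w) ∧ G.Adj v w := by
  obtain ⟨w, rfl⟩ := Sym2.mem_iff_exists.mp hv
  exact ⟨w, rfl, (mem_edgeSet G).mp he⟩

open SimpleGraph


def xlab (m j : ℕ) : Fin 6 → ℕ := ![4*m+2+j, 12*m+3-j, 2+j, 8*m+1-j, 8*m+4+j, 4*m+1-j]
def vlab (m j : ℕ) : Fin 6 → ℕ := ![9*m+4+j, 3*m+1-j, 5*m+2+j, 11*m+3-j, m+2+j, 7*m+1-j]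

def fVdef (m : ℕ) : VV m → ℕ
  | .inl x => vlab m x.1.val x.2
  | .inr k => ![12*m+4, 1, 8*m+2] k

def gdef (m : ℕ) : VV m → VV m → ℕ
  | .inl ⟨j, i⟩, .inl ⟨j', i'⟩ =>
      if j = j' then
        (if i' = i + 1 then xlab m j.val i
         else if i = i' + 1 then xlab m j.val i' else 0)
      else 0
  | .inr k, .inr k' =>
      if (k = 0 ∧ k' = 1) ∨ (k = 1 ∧ k' = 0) then 8*m+3
      else if (k = 1 ∧ k' = 2) ∨ (k = 2 ∧ k' = 1) then 12*m+5 else 0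
  | _, _ => 0

lemma fin6_no2 (a : Fin 6) : ¬ (a = a + 1 + 1) := by
  intro h
  rw [add_assoc] at h
  have h2 : a + 0 = a + (1+1) := by rw [add_zero]; exact h
  have := add_left_cancel h2
  exact absurd this.symm (by decide)

lemma gdef_symm (m : ℕ) : ∀ a b, gdef m a b = gdef m b a := by
  rintro (⟨j, i⟩ | k) (⟨j', i'⟩ | k')
  · simp only [gdef]
    by_cases hj : j = j'
    · subst hj
      rw [if_pos rfl, if_pos rfl]
      by_cases h1 : i' = i + 1
      · by_cases h2 : i = i' + 1
        · exact absurd (by rw [h1] at h2; exact h2) (fin6_no2 i)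
        · rw [if_pos h1, if_neg h2, if_pos h1]
      · by_cases h2 : i = i' + 1
        · rw [if_neg h1, if_pos h2, if_pos h2]
        · rw [if_neg h1, if_neg h2, if_neg h2, if_neg h1]
    · rw [if_neg hj, if_neg (fun hc => hj hc.symm)]
  · rfl
  · rfl
  · fin_cases k <;> fin_cases k' <;> simp [gdef]

noncomputable def fEdef (m : ℕ) : Sym2 (VV m) → ℕ := Sym2.lift ⟨gdef m, gdef_symm m⟩

lemma fE_mk (u v : VV m) : fEdef m s(u, v) = gdef m u v := Sym2.lift_mk _ _ _

lemma fE_cyc (j : Fin m) (i : Fin 6) :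
    fEdef m s(.inl (j,i), .inl (j,i+1)) = xlab m j.val i := by
  rw [fE_mk]
  show (if _ then _ else _) = _
  rw [if_pos rfl, if_pos rfl]

lemma fE_cyc' (j : Fin m) (i : Fin 6) :
    fEdef m s(.inl (j,i), .inl (j,i-1)) = xlab m j.val (i-1) := by
  have h : s((.inl (j,i) : VV m), .inl (j,i-1)) = s(.inl (j,i-1), .inl (j,(i-1)+1)) := by
    rw [Sym2.eq_swap, sub_add_cancel]
  rw [h, fE_cyc]

lemma fE_path01 : fEdef m s(.inr 0, .inr 1) = 8*m+3 := by
  rw [fE_mk]; simp [gdef]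

lemma fE_path12 : fEdef m s(.inr 1, .inr 2) = 12*m+5 := by
  rw [fE_mk]; simp [gdef]


def wpat (m : ℕ) : Fin 6 → ℕ := ![8*m+3, 16*m+5, 12*m+5, 8*m+3, 16*m+5, 12*m+5]
def ypat (m : ℕ) : Fin 6 → ℕ := ![12*m+5, 8*m+3, 16*m+5, 12*m+5, 8*m+3, 16*m+5]

lemma eW_mk {V : Type*} (fV : V → ℕ) (u v : V) : eWeight fV s(u, v) = fV u + fV v :=
  Sym2.lift_mk _ _ _

lemma fin6_ne (i : Fin 6) : i - 1 ≠ i + 1 := by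
  intro h
  rw [sub_eq_iff_eq_add] at h
  exact fin6_no2 i h

lemma inl_pair_ne (j : Fin m) (i : Fin 6) :
    (.inl (j, i-1) : VV m) ≠ .inl (j, i+1) := by
  intro h
  exact fin6_ne i (congrArg (fun w => (Sum.elim Prod.snd (fun _ => 0) w : Fin 6)) h)

lemma vW_cyc (j : Fin m) (i : Fin 6) :
    vWeight (GG m) (fEdef m) (.inl (j,i)) = wpat m i := by
  have hj := j.isLt
  rw [vWeight_eq, nf_inl]
  show ∑ w ∈ ({(.inl (j, i-1) : VV m), .inl (j, i+1)} : Finset (VV m)), fEdef m s(.inl (j,i), w) = _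
  rw [Finset.sum_pair (inl_pair_ne j i), fE_cyc', fE_cyc]
  fin_cases i
  · show 4*m+1-(j:ℕ) + (4*m+2+(j:ℕ)) = 8*m+3; omega
  · show 4*m+2+(j:ℕ) + (12*m+3-(j:ℕ)) = 16*m+5; omega
  · show 12*m+3-(j:ℕ) + (2+(j:ℕ)) = 12*m+5; omega
  · show 2+(j:ℕ) + (8*m+1-(j:ℕ)) = 8*m+3; omega
  · show 8*m+1-(j:ℕ) + (8*m+4+(j:ℕ)) = 16*m+5; omega
  · show 8*m+4+(j:ℕ) + (4*m+1-(j:ℕ)) = 12*m+5; omega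

lemma vW_p0 : vWeight (GG m) (fEdef m) (.inr 0) = 8*m+3 := by
  rw [vWeight_eq, nf_inr0, Finset.sum_singleton, fE_path01]

lemma vW_p1 : vWeight (GG m) (fEdef m) (.inr 1) = 20*m+8 := by
  rw [vWeight_eq, nf_inr1]
  rw [Finset.sum_pair (by simp)]
  have h1 : s((.inr 1 : VV m), .inr 0) = s(.inr 0, .inr 1) := Sym2.eq_swap
  rw [h1, fE_path01, fE_path12]
  ring

lemma vW_p2 : vWeight (GG m) (fEdef m) (.inr 2) = 12*m+5 := by
  rw [vWeight_eq, nf_inr2, Finset.sum_singleton]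
  have h1 : s((.inr 2 : VV m), .inr 1) = s(.inr 1, .inr 2) := Sym2.eq_swap
  rw [h1, fE_path12]

lemma eW_cyc (j : Fin m) (i : Fin 6) :
    eWeight (fVdef m) s(.inl (j,i), .inl (j,i+1)) = ypat m i := by
  have hj := j.isLt
  rw [eW_mk]
  show vlab m j.val i + vlab m j.val (i+1) = _
  fin_cases i
  · show 9*m+4+(j:ℕ) + (3*m+1-(j:ℕ)) = 12*m+5; omega
  · show 3*m+1-(j:ℕ) + (5*m+2+(j:ℕ)) = 8*m+3; omega
  · show 5*m+2+(j:ℕ) + (11*m+3-(j:ℕ)) = 16*m+5; omega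
  · show 11*m+3-(j:ℕ) + (m+2+(j:ℕ)) = 12*m+5; omega
  · show m+2+(j:ℕ) + (7*m+1-(j:ℕ)) = 8*m+3; omega
  · show 7*m+1-(j:ℕ) + (9*m+4+(j:ℕ)) = 16*m+5; omega

lemma eW_path01 : eWeight (fVdef m) s(.inr 0, .inr 1) = 12*m+5 := by
  rw [eW_mk]; show (12*m+4) + 1 = _; ring

lemma eW_path12 : eWeight (fVdef m) s(.inr 1, .inr 2) = 8*m+3 := by
  rw [eW_mk]; show 1 + (8*m+2) = _; ring

lemma card_VV : Fintype.card (VV m) = 6*m+3 := by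
  simp [Fintype.card_sum, Fintype.card_prod]
  ring

lemma deg_inl (x : Fin m × Fin 6) : (GG m).degree (.inl x) = 2 := by
  rw [← SimpleGraph.card_neighborFinset_eq_degree, nf_inl]
  rw [Finset.card_pair (inl_pair_ne x.1 x.2)]

lemma deg_inr0 : (GG m).degree (.inr 0) = 1 := by
  rw [← SimpleGraph.card_neighborFinset_eq_degree, nf_inr0, Finset.card_singleton]

lemma deg_inr1 : (GG m).degree (.inr 1) = 2 := by
  rw [← SimpleGraph.card_neighborFinset_eq_degree, nf_inr1, Finset.card_pair (by simp)]

lemma deg_inr2 : (GG m).degree (.inr 2) = 1 := by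
  rw [← SimpleGraph.card_neighborFinset_eq_degree, nf_inr2, Finset.card_singleton]

lemma card_edges : (GG m).edgeFinset.card = 6*m+2 := by
  have h := SimpleGraph.sum_degrees_eq_twice_card_edges (GG m)
  rw [Fintype.sum_sum_type] at h
  have h1 : ∑ x : Fin m × Fin 6, (GG m).degree (.inl x) = 12*m := by
    rw [Finset.sum_congr rfl (fun x _ => deg_inl x)]
    simp [Finset.card_univ, Fintype.card_prod]
    ring
  have h2 : ∑ k : Fin 3, (GG m).degree (.inr k) = 4 := by
    rw [Fin.sum_univ_three]
    rw [deg_inr0, deg_inr1, deg_inr2]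
  have h' : 12*m + 4 = 2 * (GG m).edgeFinset.card := by
    rw [← h1, ← h2]; convert h
  omega

lemma edge_cases {e : Sym2 (VV m)} (he : e ∈ (GG m).edgeSet) :
    (∃ j i, e = s(.inl (j,i), .inl (j,i+1))) ∨ e = s(.inr 0, .inr 1) ∨ e = s(.inr 1, .inr 2) := by
  induction e with
  | _ u v =>
    rw [SimpleGraph.mem_edgeSet] at he
    match u, v with
    | .inl ⟨j, i⟩, .inl ⟨j', i'⟩ =>
      obtain ⟨hj, hii⟩ := gg_adj_inl_inl.mp he
      simp only at hj hii
      subst hj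
      left
      rcases hii with h | h
      · exact ⟨j, i', by rw [Sym2.eq_swap, h]⟩
      · exact ⟨j, i, by rw [h]⟩
    | .inl x, .inr k => exact absurd he gg_not_adj_inl_inr
    | .inr k, .inl x => exact absurd he gg_not_adj_inr_inl
    | .inr k, .inr k' =>
      right
      have h := gg_adj_inr_inr.mp he
      have hk := k.isLt
      have hk' := k'.isLt
      rcases h with h | h
      · have : (k = 0 ∧ k' = 1) ∨ (k = 1 ∧ k' = 2) := by
          simp only [Fin.ext_iff]
          show (k.val = 0 ∧ k'.val = 1) ∨ (k.val = 1 ∧ k'.val = 2)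
          omega
        rcases this with ⟨rfl, rfl⟩ | ⟨rfl, rfl⟩
        · left; rfl
        · right; rfl
      · have : (k' = 0 ∧ k = 1) ∨ (k' = 1 ∧ k = 2) := by
          simp only [Fin.ext_iff]
          show (k'.val = 0 ∧ k.val = 1) ∨ (k'.val = 1 ∧ k.val = 2)
          omega
        rcases this with ⟨rfl, rfl⟩ | ⟨rfl, rfl⟩
        · left; exact Sym2.eq_swap
        · right; exact Sym2.eq_swap

noncomputable def Flab (m : ℕ) : VV m ⊕ ((GG m).edgeSet : Set (Sym2 (VV m))) → ℕ :=
  Sum.elim (fVdef m) (fun e => fEdef m e.1)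

def cycEdge (j : Fin m) (i : Fin 6) : ((GG m).edgeSet : Set (Sym2 (VV m))) :=
  ⟨s(.inl (j,i), .inl (j,i+1)), by
    rw [SimpleGraph.mem_edgeSet, gg_adj_inl_inl]; exact ⟨rfl, Or.inr rfl⟩⟩

def pEdge01 : ((GG m).edgeSet : Set (Sym2 (VV m))) :=
  ⟨s(.inr 0, .inr 1), by rw [SimpleGraph.mem_edgeSet, gg_adj_inr_inr]; left; rfl⟩

def pEdge12 : ((GG m).edgeSet : Set (Sym2 (VV m))) :=
  ⟨s(.inr 1, .inr 2), by rw [SimpleGraph.mem_edgeSet, gg_adj_inr_inr]; left; rfl⟩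

lemma Flab_cycEdge (j : Fin m) (i : Fin 6) : Flab m (.inr (cycEdge j i)) = xlab m j.val i :=
  fE_cyc j i

lemma Flab_mem (z : VV m ⊕ ((GG m).edgeSet : Set (Sym2 (VV m)))) :
    Flab m z ∈ Set.Icc 1 (12*m+5) := by
  rw [Set.mem_Icc]
  match z with
  | .inl (.inl ⟨j, i⟩) =>
    have hj := j.isLt
    show 1 ≤ vlab m j.val i ∧ vlab m j.val i ≤ 12*m+5
    fin_cases i
    · show 1 ≤ 9*m+4+(j:ℕ) ∧ 9*m+4+(j:ℕ) ≤ 12*m+5; omega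
    · show 1 ≤ 3*m+1-(j:ℕ) ∧ 3*m+1-(j:ℕ) ≤ 12*m+5; omega
    · show 1 ≤ 5*m+2+(j:ℕ) ∧ 5*m+2+(j:ℕ) ≤ 12*m+5; omega
    · show 1 ≤ 11*m+3-(j:ℕ) ∧ 11*m+3-(j:ℕ) ≤ 12*m+5; omega
    · show 1 ≤ m+2+(j:ℕ) ∧ m+2+(j:ℕ) ≤ 12*m+5; omega
    · show 1 ≤ 7*m+1-(j:ℕ) ∧ 7*m+1-(j:ℕ) ≤ 12*m+5; omega
  | .inl (.inr k) =>
    fin_cases k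
    · show 1 ≤ 12*m+4 ∧ 12*m+4 ≤ 12*m+5; omega
    · show 1 ≤ 1 ∧ 1 ≤ 12*m+5; omega
    · show 1 ≤ 8*m+2 ∧ 8*m+2 ≤ 12*m+5; omega
  | .inr ⟨e, he⟩ =>
    show 1 ≤ fEdef m e ∧ fEdef m e ≤ 12*m+5
    rcases edge_cases he with ⟨j, i, rfl⟩ | rfl | rfl
    · have hj := j.isLt
      rw [fE_cyc]
      fin_cases i
      · show 1 ≤ 4*m+2+(j:ℕ) ∧ 4*m+2+(j:ℕ) ≤ 12*m+5; omega
      · show 1 ≤ 12*m+3-(j:ℕ) ∧ 12*m+3-(j:ℕ) ≤ 12*m+5; omega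
      · show 1 ≤ 2+(j:ℕ) ∧ 2+(j:ℕ) ≤ 12*m+5; omega
      · show 1 ≤ 8*m+1-(j:ℕ) ∧ 8*m+1-(j:ℕ) ≤ 12*m+5; omega
      · show 1 ≤ 8*m+4+(j:ℕ) ∧ 8*m+4+(j:ℕ) ≤ 12*m+5; omega
      · show 1 ≤ 4*m+1-(j:ℕ) ∧ 4*m+1-(j:ℕ) ≤ 12*m+5; omega
    · rw [fE_path01]; omega
    · rw [fE_path12]; omega

lemma Flab_surj {n : ℕ} (h1 : 1 ≤ n) (h2 : n ≤ 12*m+5) :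
    ∃ z, Flab m z = n := by
  rcases (show n = 1 ∨ (2 ≤ n ∧ n ≤ m+1) ∨ (m+2 ≤ n ∧ n ≤ 2*m+1) ∨
      (2*m+2 ≤ n ∧ n ≤ 3*m+1) ∨ (3*m+2 ≤ n ∧ n ≤ 4*m+1) ∨ (4*m+2 ≤ n ∧ n ≤ 5*m+1) ∨
      (5*m+2 ≤ n ∧ n ≤ 6*m+1) ∨ (6*m+2 ≤ n ∧ n ≤ 7*m+1) ∨ (7*m+2 ≤ n ∧ n ≤ 8*m+1) ∨
      n = 8*m+2 ∨ n = 8*m+3 ∨ (8*m+4 ≤ n ∧ n ≤ 9*m+3) ∨ (9*m+4 ≤ n ∧ n ≤ 10*m+3) ∨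
      (10*m+4 ≤ n ∧ n ≤ 11*m+3) ∨ (11*m+4 ≤ n ∧ n ≤ 12*m+3) ∨ n = 12*m+4 ∨ n = 12*m+5
    from by omega) with
    h | h | h | h | h | h | h | h | h | h | h | h | h | h | h | h | h
  · exact ⟨.inl (.inr 1), by show (1:ℕ) = n; omega⟩
  · exact ⟨.inr (cycEdge ⟨n-2, by omega⟩ 2), by rw [Flab_cycEdge]; show 2+(n-2) = n; omega⟩
  · exact ⟨.inl (.inl (⟨n-(m+2), by omega⟩, 4)), by show m+2+(n-(m+2)) = n; omega⟩
  · exact ⟨.inl (.inl (⟨3*m+1-n, by omega⟩, 1)), by show 3*m+1-(3*m+1-n) = n; omega⟩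
  · exact ⟨.inr (cycEdge ⟨4*m+1-n, by omega⟩ 5), by rw [Flab_cycEdge]; show 4*m+1-(4*m+1-n) = n; omega⟩
  · exact ⟨.inr (cycEdge ⟨n-(4*m+2), by omega⟩ 0), by rw [Flab_cycEdge]; show 4*m+2+(n-(4*m+2)) = n; omega⟩
  · exact ⟨.inl (.inl (⟨n-(5*m+2), by omega⟩, 2)), by show 5*m+2+(n-(5*m+2)) = n; omega⟩
  · exact ⟨.inl (.inl (⟨7*m+1-n, by omega⟩, 5)), by show 7*m+1-(7*m+1-n) = n; omega⟩
  · exact ⟨.inr (cycEdge ⟨8*m+1-n, by omega⟩ 3), by rw [Flab_cycEdge]; show 8*m+1-(8*m+1-n) = n; omega⟩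
  · exact ⟨.inl (.inr 2), by show 8*m+2 = n; omega⟩
  · exact ⟨.inr pEdge01, by show fEdef m s(.inr 0, .inr 1) = n; rw [fE_path01]; omega⟩
  · exact ⟨.inr (cycEdge ⟨n-(8*m+4), by omega⟩ 4), by rw [Flab_cycEdge]; show 8*m+4+(n-(8*m+4)) = n; omega⟩
  · exact ⟨.inl (.inl (⟨n-(9*m+4), by omega⟩, 0)), by show 9*m+4+(n-(9*m+4)) = n; omega⟩
  · exact ⟨.inl (.inl (⟨11*m+3-n, by omega⟩, 3)), by show 11*m+3-(11*m+3-n) = n; omega⟩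
  · exact ⟨.inr (cycEdge ⟨12*m+3-n, by omega⟩ 1), by rw [Flab_cycEdge]; show 12*m+3-(12*m+3-n) = n; omega⟩
  · exact ⟨.inl (.inr 0), by show 12*m+4 = n; omega⟩
  · exact ⟨.inr pEdge12, by show fEdef m s(.inr 1, .inr 2) = n; rw [fE_path12]; omega⟩

lemma Flab_range : Set.range (Flab m) = Set.Icc 1 (12*m+5) := by
  apply Set.eq_of_subset_of_subset
  · rintro x ⟨z, rfl⟩; exact Flab_mem z
  · rintro x hx
    rw [Set.mem_Icc] at hx
    obtain ⟨z, hz⟩ := Flab_surj hx.1 hx.2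
    exact ⟨z, hz⟩

lemma Flab_inj : Function.Injective (Flab m) := by
  have hcard1 : Fintype.card (VV m ⊕ ((GG m).edgeSet : Set (Sym2 (VV m)))) = 12*m+5 := by
    rw [Fintype.card_sum, card_VV]
    have : Fintype.card ((GG m).edgeSet : Set (Sym2 (VV m))) = (GG m).edgeFinset.card := by
      rw [SimpleGraph.edgeFinset, Set.toFinset_card]
    rw [this, card_edges]
    ring
  have hcard2 : Fintype.card (Set.Icc 1 (12*m+5) : Set ℕ) = 12*m+5 := by
    rw [← Set.toFinset_card, Set.toFinset_Icc, Nat.card_Icc]; omega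
  let F' : (VV m ⊕ ((GG m).edgeSet : Set (Sym2 (VV m)))) → (Set.Icc 1 (12*m+5) : Set ℕ) :=
    fun z => ⟨Flab m z, by rw [← Flab_range]; exact Set.mem_range_self z⟩
  have hsurj : Function.Surjective F' := by
    rintro ⟨x, hx⟩
    rw [← Flab_range] at hx
    obtain ⟨z, hz⟩ := hx
    exact ⟨z, Subtype.ext hz⟩
  have hbij : Function.Bijective F' := by
    rw [Fintype.bijective_iff_surjective_and_card]
    exact ⟨hsurj, by rw [hcard1, hcard2]⟩
  intro z1 z2 h
  exact hbij.1 (Subtype.ext h : F' z1 = F' z2)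

lemma eW_cyc' (j : Fin m) (i : Fin 6) :
    eWeight (fVdef m) s(.inl (j,i), .inl (j,i-1)) = ypat m (i-1) := by
  have h : s((.inl (j,i) : VV m), .inl (j,i-1)) = s(.inl (j,i-1), .inl (j,(i-1)+1)) := by
    rw [Sym2.eq_swap, sub_add_cancel]
  rw [h, eW_cyc]

lemma adj_inl_cases {j : Fin m} {i : Fin 6} {w : VV m} (h : (GG m).Adj (.inl (j,i)) w) :
    w = .inl (j, i-1) ∨ w = .inl (j, i+1) := by
  have hw : w ∈ (GG m).neighborFinset (.inl (j,i)) := (SimpleGraph.mem_neighborFinset _ _ _).2 h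
  rw [nf_inl] at hw
  simpa using hw

lemma adj_inr0_cases {w : VV m} (h : (GG m).Adj (.inr 0) w) : w = .inr 1 := by
  have hw : w ∈ (GG m).neighborFinset (.inr 0) := (SimpleGraph.mem_neighborFinset _ _ _).2 h
  rw [nf_inr0] at hw
  simpa using hw

lemma adj_inr1_cases {w : VV m} (h : (GG m).Adj (.inr 1) w) : w = .inr 0 ∨ w = .inr 2 := by
  have hw : w ∈ (GG m).neighborFinset (.inr 1) := (SimpleGraph.mem_neighborFinset _ _ _).2 h
  rw [nf_inr1] at hw
  simpa using hw

lemma adj_inr2_cases {w : VV m} (h : (GG m).Adj (.inr 2) w) : w = .inr 1 := by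
  have hw : w ∈ (GG m).neighborFinset (.inr 2) := (SimpleGraph.mem_neighborFinset _ _ _).2 h
  rw [nf_inr2] at hw
  simpa using hw

section patterns
variable (hm : 1 ≤ m)
include hm

lemma wpat_adj (i : Fin 6) : wpat m i ≠ wpat m (i+1) := by
  fin_cases i
  · show 8*m+3 ≠ 16*m+5; omega
  · show 16*m+5 ≠ 12*m+5; omega
  · show 12*m+5 ≠ 8*m+3; omega
  · show 8*m+3 ≠ 16*m+5; omega
  · show 16*m+5 ≠ 12*m+5; omega
  · show 12*m+5 ≠ 8*m+3; omega

lemma ypat_adj (i : Fin 6) : ypat m i ≠ ypat m (i+1) := by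
  fin_cases i
  · show 12*m+5 ≠ 8*m+3; omega
  · show 8*m+3 ≠ 16*m+5; omega
  · show 16*m+5 ≠ 12*m+5; omega
  · show 12*m+5 ≠ 8*m+3; omega
  · show 8*m+3 ≠ 16*m+5; omega
  · show 16*m+5 ≠ 12*m+5; omega

lemma wpat_ne_ypat (i : Fin 6) : wpat m i ≠ ypat m i := by
  fin_cases i
  · show 8*m+3 ≠ 12*m+5; omega
  · show 16*m+5 ≠ 8*m+3; omega
  · show 12*m+5 ≠ 16*m+5; omega
  · show 8*m+3 ≠ 12*m+5; omega
  · show 16*m+5 ≠ 8*m+3; omega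
  · show 12*m+5 ≠ 16*m+5; omega

lemma wpat_succ_ne_ypat (i : Fin 6) : wpat m (i+1) ≠ ypat m i := by
  fin_cases i
  · show 16*m+5 ≠ 12*m+5; omega
  · show 12*m+5 ≠ 8*m+3; omega
  · show 8*m+3 ≠ 16*m+5; omega
  · show 16*m+5 ≠ 12*m+5; omega
  · show 12*m+5 ≠ 8*m+3; omega
  · show 8*m+3 ≠ 16*m+5; omega

lemma condA : ∀ u v, (GG m).Adj u v →
    vWeight (GG m) (fEdef m) u ≠ vWeight (GG m) (fEdef m) v := by
  rintro (⟨j, i⟩ | k) (⟨j', i'⟩ | k') h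
  · obtain ⟨hj, hii⟩ := gg_adj_inl_inl.mp h
    simp only at hj hii
    subst hj
    rw [vW_cyc, vW_cyc]
    rcases hii with h1 | h1
    · rw [h1]; exact (wpat_adj hm i').symm
    · rw [h1]; exact wpat_adj hm i
  · exact absurd h gg_not_adj_inl_inr
  · exact absurd h gg_not_adj_inr_inl
  · have hval := gg_adj_inr_inr.mp h
    have hk := k.isLt
    have hk' := k'.isLt
    have hcases : (k = 0 ∧ k' = 1) ∨ (k = 1 ∧ k' = 2) ∨ (k' = 0 ∧ k = 1) ∨ (k' = 1 ∧ k = 2) := by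
      simp only [Fin.ext_iff]
      show (k.val = 0 ∧ k'.val = 1) ∨ (k.val = 1 ∧ k'.val = 2) ∨
        (k'.val = 0 ∧ k.val = 1) ∨ (k'.val = 1 ∧ k.val = 2)
      omega
    rcases hcases with ⟨rfl, rfl⟩ | ⟨rfl, rfl⟩ | ⟨rfl, rfl⟩ | ⟨rfl, rfl⟩
    · rw [vW_p0, vW_p1]; omega
    · rw [vW_p1, vW_p2]; omega
    · rw [vW_p1, vW_p0]; omega
    · rw [vW_p2, vW_p1]; omega

lemma condB : ∀ e₁ ∈ (GG m).edgeSet, ∀ e₂ ∈ (GG m).edgeSet, e₁ ≠ e₂ →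
    (∃ v, v ∈ e₁ ∧ v ∈ e₂) → eWeight (fVdef m) e₁ ≠ eWeight (fVdef m) e₂ := by
  rintro e₁ h₁ e₂ h₂ hne ⟨v, hv1, hv2⟩
  obtain ⟨w₁, rfl, ha₁⟩ := incidence_decomp _ h₁ hv1
  obtain ⟨w₂, rfl, ha₂⟩ := incidence_decomp _ h₂ hv2
  have hw : w₁ ≠ w₂ := fun h => hne (by rw [h])
  rcases v with ⟨j, i⟩ | k
  · rcases adj_inl_cases ha₁ with rfl | rfl <;> rcases adj_inl_cases ha₂ with rfl | rfl
    · exact absurd rfl hw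
    · rw [eW_cyc', eW_cyc]
      have := ypat_adj hm (i-1)
      rwa [sub_add_cancel] at this
    · rw [eW_cyc', eW_cyc]
      have := ypat_adj hm (i-1)
      rw [sub_add_cancel] at this
      exact this.symm
    · exact absurd rfl hw
  · have hk := k.isLt
    have hcases : k = 0 ∨ k = 1 ∨ k = 2 := by
      simp only [Fin.ext_iff]
      show k.val = 0 ∨ k.val = 1 ∨ k.val = 2
      omega
    rcases hcases with rfl | rfl | rfl
    · rw [adj_inr0_cases ha₁, adj_inr0_cases ha₂] at hw
      exact absurd rfl hw
    · rcases adj_inr1_cases ha₁ with rfl | rfl <;> rcases adj_inr1_cases ha₂ with rfl | rfl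
      · exact absurd rfl hw
      · rw [eW_mk, eW_mk]; show 1 + (12*m+4) ≠ 1 + (8*m+2); omega
      · rw [eW_mk, eW_mk]; show 1 + (8*m+2) ≠ 1 + (12*m+4); omega
      · exact absurd rfl hw
    · rw [adj_inr2_cases ha₁, adj_inr2_cases ha₂] at hw
      exact absurd rfl hw

lemma condC : ∀ v : VV m, ∀ e ∈ (GG m).edgeSet, v ∈ e →
    vWeight (GG m) (fEdef m) v ≠ eWeight (fVdef m) e := by
  intro v e he hv
  obtain ⟨w, rfl, ha⟩ := incidence_decomp _ he hv
  rcases v with ⟨j, i⟩ | k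
  · rcases adj_inl_cases ha with rfl | rfl
    · rw [vW_cyc, eW_cyc']
      have := wpat_succ_ne_ypat hm (i-1)
      rwa [sub_add_cancel] at this
    · rw [vW_cyc, eW_cyc]
      exact wpat_ne_ypat hm i
  · have hk := k.isLt
    have hcases : k = 0 ∨ k = 1 ∨ k = 2 := by
      simp only [Fin.ext_iff]
      show k.val = 0 ∨ k.val = 1 ∨ k.val = 2
      omega
    rcases hcases with rfl | rfl | rfl
    · rw [adj_inr0_cases ha, vW_p0, eW_mk]
      show 8*m+3 ≠ 12*m+4 + 1; omega
    · rcases adj_inr1_cases ha with rfl | rfl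
      · rw [vW_p1, eW_mk]; show 20*m+8 ≠ 1 + (12*m+4); omega
      · rw [vW_p1, eW_mk]; show 20*m+8 ≠ 1 + (8*m+2); omega
    · rw [adj_inr2_cases ha, vW_p2, eW_mk]
      show 12*m+5 ≠ 8*m+2 + 1; omega

end patterns

lemma weightCount_eq (hm : 1 ≤ m) : weightCount (GG m) (fVdef m) (fEdef m) = 4 := by
  have hU : (Finset.image (vWeight (GG m) (fEdef m)) Finset.univ ∪
      Finset.image (eWeight (fVdef m)) (GG m).edgeFinset) =
      ({8*m+3, 12*m+5, 16*m+5, 20*m+8} : Finset ℕ) := by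
    apply Finset.Subset.antisymm
    · intro x hx
      rcases Finset.mem_union.mp hx with h | h
      · obtain ⟨v, _, rfl⟩ := Finset.mem_image.mp h
        rcases v with ⟨j, i⟩ | k
        · rw [vW_cyc]
          fin_cases i
          · show (8*m+3:ℕ) ∈ _; simp
          · show (16*m+5:ℕ) ∈ _; simp
          · show (12*m+5:ℕ) ∈ _; simp
          · show (8*m+3:ℕ) ∈ _; simp
          · show (16*m+5:ℕ) ∈ _; simp
          · show (12*m+5:ℕ) ∈ _; simp
        · have hk := k.isLt
          have hcases : k = 0 ∨ k = 1 ∨ k = 2 := by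
            simp only [Fin.ext_iff]
            show k.val = 0 ∨ k.val = 1 ∨ k.val = 2
            omega
          rcases hcases with rfl | rfl | rfl
          · rw [vW_p0]; simp
          · rw [vW_p1]; simp
          · rw [vW_p2]; simp
      · obtain ⟨e, he, rfl⟩ := Finset.mem_image.mp h
        rw [SimpleGraph.mem_edgeFinset] at he
        rcases edge_cases he with ⟨j, i, rfl⟩ | rfl | rfl
        · rw [eW_cyc]
          fin_cases i
          · show (12*m+5:ℕ) ∈ _; simp
          · show (8*m+3:ℕ) ∈ _; simp
          · show (16*m+5:ℕ) ∈ _; simp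
          · show (12*m+5:ℕ) ∈ _; simp
          · show (8*m+3:ℕ) ∈ _; simp
          · show (16*m+5:ℕ) ∈ _; simp
        · rw [eW_path01]; simp
        · rw [eW_path12]; simp
    · intro x hx
      simp only [Finset.mem_insert, Finset.mem_singleton] at hx
      apply Finset.mem_union_left
      rw [Finset.mem_image]
      rcases hx with rfl | rfl | rfl | rfl
      · exact ⟨.inl (⟨0, hm⟩, 0), Finset.mem_univ _, by rw [vW_cyc]; rfl⟩
      · exact ⟨.inl (⟨0, hm⟩, 2), Finset.mem_univ _, by rw [vW_cyc]; rfl⟩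
      · exact ⟨.inl (⟨0, hm⟩, 1), Finset.mem_univ _, by rw [vW_cyc]; rfl⟩
      · exact ⟨.inr 1, Finset.mem_univ _, vW_p1⟩
  rw [weightCount, hU]
  rw [Finset.card_insert_of_notMem (by simp; omega),
      Finset.card_insert_of_notMem (by simp; omega),
      Finset.card_insert_of_notMem (by simp; omega),
      Finset.card_singleton]

lemma upper_mem (hm : 1 ≤ m) :
    IsLocalTotalAntimagic (GG m) (fVdef m) (fEdef m) ∧
      weightCount (GG m) (fVdef m) (fEdef m) = 4 := by
  refine ⟨⟨⟨Flab_inj, ?_⟩, condA hm, condB hm, condC hm⟩, weightCount_eq hm⟩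
  have hc : Fintype.card (VV m) + (GG m).edgeFinset.card = 12*m+5 := by
    rw [card_VV, card_edges]; ring
  rw [hc]
  exact Flab_range

lemma rainbow {A B W1 W2 W3 y1 y2 : ℕ} (hA : 1 ≤ A) (hB : 1 ≤ B)
    (m1 : W1 = A ∨ W1 = B ∨ W1 = A+B) (m2 : W2 = A ∨ W2 = B ∨ W2 = A+B)
    (m3 : W3 = A ∨ W3 = B ∨ W3 = A+B)
    (my1 : y1 = A ∨ y1 = B ∨ y1 = A+B) (my2 : y2 = A ∨ y2 = B ∨ y2 = A+B)
    (h12 : W1 ≠ W2)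
    (hy1a : y1 ≠ W1) (hy1b : y1 ≠ W2) (hy2a : y2 ≠ W2) (hy2b : y2 ≠ W3)
    (hyy : y1 ≠ y2) : W1 ≠ W3 := by
  rcases m1 with rfl|rfl|rfl <;> rcases m2 with h2|h2|h2 <;> rcases m3 with h3|h3|h3 <;>
    rcases my1 with h4|h4|h4 <;> rcases my2 with h5|h5|h5 <;> omega

set_option maxHeartbeats 2000000 in
lemma cyc_contra {A B x0 x1 x2 x3 x4 x5 W0 W1 W2 W3 W4 W5 : ℕ}
    (hA : 1 ≤ A) (hB : 1 ≤ B) (hAB : A ≠ B)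
    (hx0 : 1 ≤ x0) (hx1 : 1 ≤ x1) (hx2 : 1 ≤ x2) (hx3 : 1 ≤ x3) (hx4 : 1 ≤ x4) (hx5 : 1 ≤ x5)
    (e0 : W0 = x5 + x0) (e1 : W1 = x0 + x1) (e2 : W2 = x1 + x2) (e3 : W3 = x2 + x3)
    (e4 : W4 = x3 + x4) (e5 : W5 = x4 + x5)
    (m0 : W0 = A ∨ W0 = B ∨ W0 = A+B) (m1 : W1 = A ∨ W1 = B ∨ W1 = A+B)
    (m2 : W2 = A ∨ W2 = B ∨ W2 = A+B) (m3 : W3 = A ∨ W3 = B ∨ W3 = A+B)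
    (m4 : W4 = A ∨ W4 = B ∨ W4 = A+B) (m5 : W5 = A ∨ W5 = B ∨ W5 = A+B)
    (a01 : W0 ≠ W1) (a12 : W1 ≠ W2) (a23 : W2 ≠ W3) (a34 : W3 ≠ W4) (a45 : W4 ≠ W5)
    (a50 : W5 ≠ W0)
    (r02 : W0 ≠ W2) (r13 : W1 ≠ W3) (r24 : W2 ≠ W4) (r35 : W3 ≠ W5) (r40 : W4 ≠ W0)
    (r51 : W5 ≠ W1) : False := by
  have hone : W0 = A+B ∨ W1 = A+B ∨ W2 = A+B := by
    rcases m0 with h0|h0|h0 <;> rcases m1 with h1|h1|h1 <;> rcases m2 with h2|h2|h2 <;> omega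
  rcases hone with h|h|h
  · rcases m5 with h5|h5|h5 <;> rcases m1 with h1|h1|h1 <;> omega
  · rcases m0 with h0|h0|h0 <;> rcases m2 with h2|h2|h2 <;> omega
  · rcases m1 with h1|h1|h1 <;> rcases m3 with h3|h3|h3 <;> omega


lemma vW_cyc_gen (fE : Sym2 (VV m) → ℕ) (j : Fin m) (i : Fin 6) :
    vWeight (GG m) fE (.inl (j,i)) =
      fE s(.inl (j,i-1), .inl (j,(i-1)+1)) + fE s(.inl (j,i), .inl (j,i+1)) := by
  rw [vWeight_eq, nf_inl]
  show ∑ w ∈ ({(.inl (j, i-1) : VV m), .inl (j, i+1)} : Finset (VV m)), fE s(.inl (j,i), w) = _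
  rw [Finset.sum_pair (inl_pair_ne j i)]
  congr 1
  rw [sub_add_cancel]
  exact congrArg fE Sym2.eq_swap

lemma vW_p0_gen (fE : Sym2 (VV m) → ℕ) : vWeight (GG m) fE (.inr 0) = fE s(.inr 0, .inr 1) := by
  rw [vWeight_eq, nf_inr0, Finset.sum_singleton]

lemma vW_p1_gen (fE : Sym2 (VV m) → ℕ) :
    vWeight (GG m) fE (.inr 1) = fE s(.inr 0, .inr 1) + fE s(.inr 1, .inr 2) := by
  rw [vWeight_eq, nf_inr1, Finset.sum_pair (by simp)]
  congr 1
  exact congrArg fE Sym2.eq_swap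

lemma vW_p2_gen (fE : Sym2 (VV m) → ℕ) : vWeight (GG m) fE (.inr 2) = fE s(.inr 1, .inr 2) := by
  rw [vWeight_eq, nf_inr2, Finset.sum_singleton]
  exact congrArg fE Sym2.eq_swap

lemma path_edges_ne : s((.inr 0 : VV m), .inr 1) ≠ s(.inr 1, .inr 2) := by
  simp [Sym2.eq_iff]

lemma fin6_ne_succ (i : Fin 6) : i ≠ i + 1 := by
  intro h
  have h2 : i + 0 = i + 1 := by rw [add_zero]; exact h
  exact absurd (add_left_cancel h2) (by decide)

lemma inl_snd_inj {j j' : Fin m} {i i' : Fin 6} (h : (.inl (j,i) : VV m) = .inl (j',i')) :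
    i = i' :=
  congrArg (Sum.elim Prod.snd fun _ => (0:Fin 6)) h

lemma cyc_edges_ne (j : Fin m) (i : Fin 6) :
    s((.inl (j,i) : VV m), .inl (j,i+1)) ≠ s(.inl (j,i+1), .inl (j,i+1+1)) := by
  intro hq
  rw [Sym2.eq_iff] at hq
  rcases hq with ⟨h1, -⟩ | ⟨h1, -⟩
  · exact fin6_ne_succ i (inl_snd_inj h1)
  · exact fin6_no2 i (inl_snd_inj h1)

lemma lower_bound_s16 (hm : 1 ≤ m) (fV : VV m → ℕ) (fE : Sym2 (VV m) → ℕ)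
    (h : IsLocalTotalAntimagic (GG m) fV fE) : 4 ≤ weightCount (GG m) fV fE := by
  obtain ⟨⟨hinj, hrange⟩, hadj, hedge, hve⟩ := h
  by_contra hlt
  push_neg at hlt
  have hwcard : (Finset.image (vWeight (GG m) fE) Finset.univ ∪
      Finset.image (eWeight fV) (GG m).edgeFinset).card ≤ 3 := by
    have : weightCount (GG m) fV fE < 4 := hlt
    rw [weightCount] at this
    omega
  have hge1 : ∀ z : VV m ⊕ ((GG m).edgeSet : Set (Sym2 (VV m))),
      1 ≤ Sum.elim fV (fun e : (GG m).edgeSet => fE e.1) z := by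
    intro z
    have hz : Sum.elim fV (fun e : (GG m).edgeSet => fE e.1) z ∈
        Set.Icc 1 (Fintype.card (VV m) + (GG m).edgeFinset.card) := by
      rw [← hrange]; exact Set.mem_range_self z
    exact hz.1
  have hfE1 : ∀ e : ((GG m).edgeSet : Set (Sym2 (VV m))), 1 ≤ fE e.1 :=
    fun e => hge1 (.inr e)
  have hA1 : 1 ≤ fE s(.inr 0, .inr 1) := hfE1 pEdge01
  have hB1 : 1 ≤ fE s(.inr 1, .inr 2) := hfE1 pEdge12
  have hAB : fE s(.inr 0, .inr 1) ≠ fE s(.inr 1, .inr 2) := by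
    intro hab
    have heq : (Sum.inr pEdge01 : VV m ⊕ ((GG m).edgeSet : Set (Sym2 (VV m)))) =
        Sum.inr pEdge12 := hinj hab
    have heq2 : (pEdge01 : ((GG m).edgeSet : Set (Sym2 (VV m)))) = pEdge12 :=
      Sum.inr.inj heq
    exact path_edges_ne (congrArg Subtype.val heq2)
  have hvmem : ∀ v : VV m, vWeight (GG m) fE v ∈
      (Finset.image (vWeight (GG m) fE) Finset.univ ∪
        Finset.image (eWeight fV) (GG m).edgeFinset) :=
    fun v => Finset.mem_union_left _ (Finset.mem_image_of_mem _ (Finset.mem_univ v))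
  have hemem : ∀ e ∈ (GG m).edgeSet, eWeight fV e ∈
      (Finset.image (vWeight (GG m) fE) Finset.univ ∪
        Finset.image (eWeight fV) (GG m).edgeFinset) :=
    fun e he => Finset.mem_union_right _
      (Finset.mem_image.mpr ⟨e, SimpleGraph.mem_edgeFinset.mpr he, rfl⟩)
  have hUeq : ({fE s(.inr 0, .inr 1), fE s(.inr 1, .inr 2),
      fE s(.inr 0, .inr 1) + fE s(.inr 1, .inr 2)} : Finset ℕ) =
      (Finset.image (vWeight (GG m) fE) Finset.univ ∪
        Finset.image (eWeight fV) (GG m).edgeFinset) := by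
    apply Finset.eq_of_subset_of_card_le
    · intro w hw
      simp only [Finset.mem_insert, Finset.mem_singleton] at hw
      rcases hw with rfl | rfl | rfl
      · rw [← vW_p0_gen fE]; exact hvmem _
      · rw [← vW_p2_gen fE]; exact hvmem _
      · rw [← vW_p1_gen fE]; exact hvmem _
    · calc (Finset.image (vWeight (GG m) fE) Finset.univ ∪
            Finset.image (eWeight fV) (GG m).edgeFinset).card ≤ 3 := hwcard
        _ ≤ _ := by
            rw [Finset.card_insert_of_notMem (by simp; omega),
                Finset.card_insert_of_notMem (by simp; omega), Finset.card_singleton]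
  have hmem3 : ∀ w ∈ (Finset.image (vWeight (GG m) fE) Finset.univ ∪
      Finset.image (eWeight fV) (GG m).edgeFinset),
      w = fE s(.inr 0, .inr 1) ∨ w = fE s(.inr 1, .inr 2) ∨
        w = fE s(.inr 0, .inr 1) + fE s(.inr 1, .inr 2) := by
    intro w hw
    rw [← hUeq] at hw
    simpa using hw
  set j0 : Fin m := ⟨0, hm⟩ with hj0
  have he0 : s((.inl (j0,0) : VV m), .inl (j0,1)) ∈ (GG m).edgeSet := (cycEdge j0 0).2
  have he1 : s((.inl (j0,1) : VV m), .inl (j0,2)) ∈ (GG m).edgeSet := (cycEdge j0 1).2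
  have he2 : s((.inl (j0,2) : VV m), .inl (j0,3)) ∈ (GG m).edgeSet := (cycEdge j0 2).2
  have he3 : s((.inl (j0,3) : VV m), .inl (j0,4)) ∈ (GG m).edgeSet := (cycEdge j0 3).2
  have he4 : s((.inl (j0,4) : VV m), .inl (j0,5)) ∈ (GG m).edgeSet := (cycEdge j0 4).2
  have he5 : s((.inl (j0,5) : VV m), .inl (j0,0)) ∈ (GG m).edgeSet := (cycEdge j0 5).2
  have hx0 : 1 ≤ fE s(.inl (j0,0), .inl (j0,1)) := hfE1 (cycEdge j0 0)
  have hx1 : 1 ≤ fE s(.inl (j0,1), .inl (j0,2)) := hfE1 (cycEdge j0 1)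
  have hx2 : 1 ≤ fE s(.inl (j0,2), .inl (j0,3)) := hfE1 (cycEdge j0 2)
  have hx3 : 1 ≤ fE s(.inl (j0,3), .inl (j0,4)) := hfE1 (cycEdge j0 3)
  have hx4 : 1 ≤ fE s(.inl (j0,4), .inl (j0,5)) := hfE1 (cycEdge j0 4)
  have hx5 : 1 ≤ fE s(.inl (j0,5), .inl (j0,0)) := hfE1 (cycEdge j0 5)
  have hWm0 := hmem3 _ (hvmem (.inl (j0,0)))
  have hWm1 := hmem3 _ (hvmem (.inl (j0,1)))
  have hWm2 := hmem3 _ (hvmem (.inl (j0,2)))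
  have hWm3 := hmem3 _ (hvmem (.inl (j0,3)))
  have hWm4 := hmem3 _ (hvmem (.inl (j0,4)))
  have hWm5 := hmem3 _ (hvmem (.inl (j0,5)))
  have hym0 := hmem3 _ (hemem _ he0)
  have hym1 := hmem3 _ (hemem _ he1)
  have hym2 := hmem3 _ (hemem _ he2)
  have hym3 := hmem3 _ (hemem _ he3)
  have hym4 := hmem3 _ (hemem _ he4)
  have hym5 := hmem3 _ (hemem _ he5)
  have hadj0 : (GG m).Adj (.inl (j0,0)) (.inl (j0,1)) :=
    gg_adj_inl_inl.mpr ⟨rfl, Or.inr rfl⟩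
  have ha0 : vWeight (GG m) fE (.inl (j0,0)) ≠ vWeight (GG m) fE (.inl (j0,1)) :=
    hadj _ _ hadj0
  have hadj1 : (GG m).Adj (.inl (j0,1)) (.inl (j0,2)) :=
    gg_adj_inl_inl.mpr ⟨rfl, Or.inr rfl⟩
  have ha1 : vWeight (GG m) fE (.inl (j0,1)) ≠ vWeight (GG m) fE (.inl (j0,2)) :=
    hadj _ _ hadj1
  have hadj2 : (GG m).Adj (.inl (j0,2)) (.inl (j0,3)) :=
    gg_adj_inl_inl.mpr ⟨rfl, Or.inr rfl⟩
  have ha2 : vWeight (GG m) fE (.inl (j0,2)) ≠ vWeight (GG m) fE (.inl (j0,3)) :=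
    hadj _ _ hadj2
  have hadj3 : (GG m).Adj (.inl (j0,3)) (.inl (j0,4)) :=
    gg_adj_inl_inl.mpr ⟨rfl, Or.inr rfl⟩
  have ha3 : vWeight (GG m) fE (.inl (j0,3)) ≠ vWeight (GG m) fE (.inl (j0,4)) :=
    hadj _ _ hadj3
  have hadj4 : (GG m).Adj (.inl (j0,4)) (.inl (j0,5)) :=
    gg_adj_inl_inl.mpr ⟨rfl, Or.inr rfl⟩
  have ha4 : vWeight (GG m) fE (.inl (j0,4)) ≠ vWeight (GG m) fE (.inl (j0,5)) :=
    hadj _ _ hadj4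
  have hadj5 : (GG m).Adj (.inl (j0,5)) (.inl (j0,0)) :=
    gg_adj_inl_inl.mpr ⟨rfl, Or.inr rfl⟩
  have ha5 : vWeight (GG m) fE (.inl (j0,5)) ≠ vWeight (GG m) fE (.inl (j0,0)) :=
    hadj _ _ hadj5
  have hyWa0 : eWeight fV s((.inl (j0,0) : VV m), .inl (j0,1)) ≠
      vWeight (GG m) fE (.inl (j0,0)) :=
    (hve (.inl (j0,0)) _ he0 (Sym2.mem_mk_left _ _)).symm
  have hyWb0 : eWeight fV s((.inl (j0,0) : VV m), .inl (j0,1)) ≠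
      vWeight (GG m) fE (.inl (j0,1)) :=
    (hve (.inl (j0,1)) _ he0 (Sym2.mem_mk_right _ _)).symm
  have hyWa1 : eWeight fV s((.inl (j0,1) : VV m), .inl (j0,2)) ≠
      vWeight (GG m) fE (.inl (j0,1)) :=
    (hve (.inl (j0,1)) _ he1 (Sym2.mem_mk_left _ _)).symm
  have hyWb1 : eWeight fV s((.inl (j0,1) : VV m), .inl (j0,2)) ≠
      vWeight (GG m) fE (.inl (j0,2)) :=
    (hve (.inl (j0,2)) _ he1 (Sym2.mem_mk_right _ _)).symm
  have hyWa2 : eWeight fV s((.inl (j0,2) : VV m), .inl (j0,3)) ≠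
      vWeight (GG m) fE (.inl (j0,2)) :=
    (hve (.inl (j0,2)) _ he2 (Sym2.mem_mk_left _ _)).symm
  have hyWb2 : eWeight fV s((.inl (j0,2) : VV m), .inl (j0,3)) ≠
      vWeight (GG m) fE (.inl (j0,3)) :=
    (hve (.inl (j0,3)) _ he2 (Sym2.mem_mk_right _ _)).symm
  have hyWa3 : eWeight fV s((.inl (j0,3) : VV m), .inl (j0,4)) ≠
      vWeight (GG m) fE (.inl (j0,3)) :=
    (hve (.inl (j0,3)) _ he3 (Sym2.mem_mk_left _ _)).symm
  have hyWb3 : eWeight fV s((.inl (j0,3) : VV m), .inl (j0,4)) ≠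
      vWeight (GG m) fE (.inl (j0,4)) :=
    (hve (.inl (j0,4)) _ he3 (Sym2.mem_mk_right _ _)).symm
  have hyWa4 : eWeight fV s((.inl (j0,4) : VV m), .inl (j0,5)) ≠
      vWeight (GG m) fE (.inl (j0,4)) :=
    (hve (.inl (j0,4)) _ he4 (Sym2.mem_mk_left _ _)).symm
  have hyWb4 : eWeight fV s((.inl (j0,4) : VV m), .inl (j0,5)) ≠
      vWeight (GG m) fE (.inl (j0,5)) :=
    (hve (.inl (j0,5)) _ he4 (Sym2.mem_mk_right _ _)).symm
  have hyWa5 : eWeight fV s((.inl (j0,5) : VV m), .inl (j0,0)) ≠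
      vWeight (GG m) fE (.inl (j0,5)) :=
    (hve (.inl (j0,5)) _ he5 (Sym2.mem_mk_left _ _)).symm
  have hyWb5 : eWeight fV s((.inl (j0,5) : VV m), .inl (j0,0)) ≠
      vWeight (GG m) fE (.inl (j0,0)) :=
    (hve (.inl (j0,0)) _ he5 (Sym2.mem_mk_right _ _)).symm
  have hyy0 : eWeight fV s((.inl (j0,0) : VV m), .inl (j0,1)) ≠
      eWeight fV s((.inl (j0,1) : VV m), .inl (j0,2)) :=
    hedge _ he0 _ he1 (cyc_edges_ne j0 0)
      ⟨.inl (j0,1), Sym2.mem_mk_right _ _, Sym2.mem_mk_left _ _⟩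
  have hyy1 : eWeight fV s((.inl (j0,1) : VV m), .inl (j0,2)) ≠
      eWeight fV s((.inl (j0,2) : VV m), .inl (j0,3)) :=
    hedge _ he1 _ he2 (cyc_edges_ne j0 1)
      ⟨.inl (j0,2), Sym2.mem_mk_right _ _, Sym2.mem_mk_left _ _⟩
  have hyy2 : eWeight fV s((.inl (j0,2) : VV m), .inl (j0,3)) ≠
      eWeight fV s((.inl (j0,3) : VV m), .inl (j0,4)) :=
    hedge _ he2 _ he3 (cyc_edges_ne j0 2)
      ⟨.inl (j0,3), Sym2.mem_mk_right _ _, Sym2.mem_mk_left _ _⟩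
  have hyy3 : eWeight fV s((.inl (j0,3) : VV m), .inl (j0,4)) ≠
      eWeight fV s((.inl (j0,4) : VV m), .inl (j0,5)) :=
    hedge _ he3 _ he4 (cyc_edges_ne j0 3)
      ⟨.inl (j0,4), Sym2.mem_mk_right _ _, Sym2.mem_mk_left _ _⟩
  have hyy4 : eWeight fV s((.inl (j0,4) : VV m), .inl (j0,5)) ≠
      eWeight fV s((.inl (j0,5) : VV m), .inl (j0,0)) :=
    hedge _ he4 _ he5 (cyc_edges_ne j0 4)
      ⟨.inl (j0,5), Sym2.mem_mk_right _ _, Sym2.mem_mk_left _ _⟩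
  have hyy5 : eWeight fV s((.inl (j0,5) : VV m), .inl (j0,0)) ≠
      eWeight fV s((.inl (j0,0) : VV m), .inl (j0,1)) :=
    hedge _ he5 _ he0 (cyc_edges_ne j0 5)
      ⟨.inl (j0,0), Sym2.mem_mk_right _ _, Sym2.mem_mk_left _ _⟩
  have hE0 : vWeight (GG m) fE (.inl (j0,0)) =
      fE s(.inl (j0,5), .inl (j0,0)) + fE s(.inl (j0,0), .inl (j0,1)) :=
    vW_cyc_gen fE j0 0
  have hE1 : vWeight (GG m) fE (.inl (j0,1)) =
      fE s(.inl (j0,0), .inl (j0,1)) + fE s(.inl (j0,1), .inl (j0,2)) :=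
    vW_cyc_gen fE j0 1
  have hE2 : vWeight (GG m) fE (.inl (j0,2)) =
      fE s(.inl (j0,1), .inl (j0,2)) + fE s(.inl (j0,2), .inl (j0,3)) :=
    vW_cyc_gen fE j0 2
  have hE3 : vWeight (GG m) fE (.inl (j0,3)) =
      fE s(.inl (j0,2), .inl (j0,3)) + fE s(.inl (j0,3), .inl (j0,4)) :=
    vW_cyc_gen fE j0 3
  have hE4 : vWeight (GG m) fE (.inl (j0,4)) =
      fE s(.inl (j0,3), .inl (j0,4)) + fE s(.inl (j0,4), .inl (j0,5)) :=
    vW_cyc_gen fE j0 4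
  have hE5 : vWeight (GG m) fE (.inl (j0,5)) =
      fE s(.inl (j0,4), .inl (j0,5)) + fE s(.inl (j0,5), .inl (j0,0)) :=
    vW_cyc_gen fE j0 5
  have hr0 : vWeight (GG m) fE (.inl (j0,0)) ≠ vWeight (GG m) fE (.inl (j0,2)) :=
    rainbow hA1 hB1 hWm0 hWm1 hWm2 hym0 hym1 ha0 hyWa0 hyWb0 hyWa1 hyWb1 hyy0
  have hr1 : vWeight (GG m) fE (.inl (j0,1)) ≠ vWeight (GG m) fE (.inl (j0,3)) :=
    rainbow hA1 hB1 hWm1 hWm2 hWm3 hym1 hym2 ha1 hyWa1 hyWb1 hyWa2 hyWb2 hyy1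
  have hr2 : vWeight (GG m) fE (.inl (j0,2)) ≠ vWeight (GG m) fE (.inl (j0,4)) :=
    rainbow hA1 hB1 hWm2 hWm3 hWm4 hym2 hym3 ha2 hyWa2 hyWb2 hyWa3 hyWb3 hyy2
  have hr3 : vWeight (GG m) fE (.inl (j0,3)) ≠ vWeight (GG m) fE (.inl (j0,5)) :=
    rainbow hA1 hB1 hWm3 hWm4 hWm5 hym3 hym4 ha3 hyWa3 hyWb3 hyWa4 hyWb4 hyy3
  have hr4 : vWeight (GG m) fE (.inl (j0,4)) ≠ vWeight (GG m) fE (.inl (j0,0)) :=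
    rainbow hA1 hB1 hWm4 hWm5 hWm0 hym4 hym5 ha4 hyWa4 hyWb4 hyWa5 hyWb5 hyy4
  have hr5 : vWeight (GG m) fE (.inl (j0,5)) ≠ vWeight (GG m) fE (.inl (j0,1)) :=
    rainbow hA1 hB1 hWm5 hWm0 hWm1 hym5 hym0 ha5 hyWa5 hyWb5 hyWa0 hyWb0 hyy5
  exact cyc_contra hA1 hB1 hAB hx0 hx1 hx2 hx3 hx4 hx5 hE0 hE1 hE2 hE3 hE4 hE5
    hWm0 hWm1 hWm2 hWm3 hWm4 hWm5 ha0 ha1 ha2 ha3 ha4 ha5 hr0 hr1 hr2 hr3 hr4 hr5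


/-- for every `m ≥ 1`, `χ_lt(mC₆ + P₃) = 4`. -/
theorem stmt16 (m : ℕ) (hm : 1 ≤ m) :
    chiLT (copies m (SimpleGraph.cycleGraph 6) ⊕g SimpleGraph.pathGraph 3) = 4 := by
  apply le_antisymm
  · exact Nat.sInf_le ⟨fVdef m, fEdef m, (upper_mem hm).1, (upper_mem hm).2⟩
  · apply le_csInf
    · exact ⟨4, fVdef m, fEdef m, (upper_mem hm).1, (upper_mem hm).2⟩
    · rintro n ⟨fV, fE, hlab, rfl⟩
      exact lower_bound_s16 hm fV fE hlab

end LTA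
end
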